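/- arXiv:1102.4727 — 6 statements merged into one kernel-verified Lean document; each statement's English description precedes it below -/
import Mathlib

section
/- In a unicyclic graph G with unique cycle C, for any two consecutive edges e and f on C (i.e., edges of C sharing an endpoint), at most one of e and f is μ-critical; equivalently, μ(G − e) = μ(G) or μ(G − f) = μ(G). -/
/-- A set of vertices is independent if no two of its vertices are adjacent. -/
def SimpleGraph.IsIndepSet' {V : Type*} (G : SimpleGraph V) (s : Set V) : Prop :=
  s.Pairwise (fun a b => ¬ G.Adj a b)

/-- The independence number: the maximum cardinality of an independent set. -/
noncomputable def indepNum {V : Type*} (G : SimpleGraph V) : ℕ :=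
  sSup {n | ∃ s : Set V, G.IsIndepSet' s ∧ s.ncard = n}

/-- The matching number: the maximum cardinality of a matching. -/
noncomputable def matchNum {V : Type*} (G : SimpleGraph V) : ℕ :=
  sSup {n | ∃ M : SimpleGraph.Subgraph G, M.IsMatching ∧ M.edgeSet.ncard = n}

/-- A maximum independent set. -/
def IsMaxIndepSet {V : Type*} (G : SimpleGraph V) (s : Set V) : Prop :=
  G.IsIndepSet' s ∧ s.ncard = indepNum G

/-- The core: intersection of all maximum independent sets. -/
noncomputable def core {V : Type*} (G : SimpleGraph V) : Set V :=
  ⋂₀ {s | IsMaxIndepSet G s}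

/-- Open neighborhood of a set. -/
def nbhdSet {V : Type*} (G : SimpleGraph V) (s : Set V) : Set V :=
  {v | ∃ w ∈ s, G.Adj v w}

/-- Closed neighborhood of a set. -/
def closedNbhdSet {V : Type*} (G : SimpleGraph V) (s : Set V) : Set V :=
  s ∪ nbhdSet G s

/-- The tree component of `G - xy` containing `x`. -/
noncomputable def treeComp {V : Type*} (G : SimpleGraph V) (x y : V) :
    SimpleGraph ((G.deleteEdges {s(x,y)}).connectedComponentMk x).supp :=
  (G.deleteEdges {s(x,y)}).induce ((G.deleteEdges {s(x,y)}).connectedComponentMk x).supp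



open SimpleGraph

/-- Promote a subgraph of a smaller graph to a subgraph of a bigger graph. -/
def subUpcast {V : Type*} {H G : SimpleGraph V} (hle : H ≤ G) (M : H.Subgraph) : G.Subgraph where
  verts := M.verts
  Adj := M.Adj
  adj_sub := fun h => hle (M.adj_sub h)
  edge_vert := fun h => M.edge_vert h
  symm := M.symm

lemma subUpcast_isMatching {V : Type*} {H G : SimpleGraph V} (hle : H ≤ G) (M : H.Subgraph)
    (hM : M.IsMatching) : (subUpcast hle M).IsMatching := hM

lemma subUpcast_edgeSet {V : Type*} {H G : SimpleGraph V} (hle : H ≤ G) (M : H.Subgraph) :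
    (subUpcast hle M).edgeSet = M.edgeSet := rfl

lemma matchSet_nonempty {V : Type*} (G : SimpleGraph V) :
    {n | ∃ M : SimpleGraph.Subgraph G, M.IsMatching ∧ M.edgeSet.ncard = n}.Nonempty :=
  ⟨0, ⊥, by intro v hv; simp [Subgraph.verts_bot] at hv, by simp⟩

lemma matchSet_bdd {V : Type*} [Fintype V] (G : SimpleGraph V) :
    BddAbove {n | ∃ M : SimpleGraph.Subgraph G, M.IsMatching ∧ M.edgeSet.ncard = n} := by
  refine ⟨G.edgeSet.ncard, fun n hn => ?_⟩
  obtain ⟨M, _, rfl⟩ := hn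
  exact Set.ncard_le_ncard (M.edgeSet_subset) (Set.toFinite _)

lemma matchNum_mem {V : Type*} [Fintype V] (G : SimpleGraph V) :
    matchNum G ∈ {n | ∃ M : SimpleGraph.Subgraph G, M.IsMatching ∧ M.edgeSet.ncard = n} :=
  Nat.sSup_mem (matchSet_nonempty G) (matchSet_bdd G)

lemma matchNum_le {V : Type*} [Fintype V] {H G : SimpleGraph V} (hle : H ≤ G) :
    matchNum H ≤ matchNum G := by
  obtain ⟨M, hM, hcard⟩ := matchNum_mem H
  exact hcard ▸ le_csSup (matchSet_bdd G) ⟨subUpcast hle M, subUpcast_isMatching hle M hM, rfl⟩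

lemma matchNum_del_eq {V : Type*} [Fintype V] (G : SimpleGraph V) (e : Sym2 V)
    (M : G.Subgraph) (hM : M.IsMatching) (hcard : M.edgeSet.ncard = matchNum G)
    (hne : e ∉ M.edgeSet) : matchNum (G.deleteEdges {e}) = matchNum G := by
  refine le_antisymm (matchNum_le (G.deleteEdges_le _)) ?_
  set H := G.deleteEdges {e}
  have hMH : ∀ a b, M.Adj a b → H.Adj a b := by
    intro a b hab
    refine ⟨M.adj_sub hab, fun hfe => ?_⟩
    rw [SimpleGraph.fromEdgeSet_adj, Set.mem_singleton_iff] at hfe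
    exact hne (hfe.1 ▸ Subgraph.mem_edgeSet.2 hab)
  let M' : H.Subgraph :=
    { verts := M.verts, Adj := M.Adj,
      adj_sub := fun h => hMH _ _ h,
      edge_vert := fun h => M.edge_vert h,
      symm := M.symm }
  have hM' : M'.IsMatching := hM
  have : M'.edgeSet = M.edgeSet := rfl
  calc matchNum G = M'.edgeSet.ncard := by rw [this, hcard]
    _ ≤ matchNum H := le_csSup (matchSet_bdd H) ⟨M', hM', rfl⟩

lemma mem_edge_exists {V : Type*} {G : SimpleGraph V} (M : G.Subgraph) {e : Sym2 V} {w : V}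
    (he : e ∈ M.edgeSet) (hw : w ∈ e) : ∃ u, M.Adj w u ∧ e = s(w, u) := by
  induction e using Sym2.ind with
  | _ a b =>
    rw [Subgraph.mem_edgeSet] at he
    rcases Sym2.mem_iff.1 hw with rfl | rfl
    · exact ⟨b, he, rfl⟩
    · exact ⟨a, he.symm, Sym2.eq_swap⟩

theorem stmt5 {V : Type*} [Fintype V] (G : SimpleGraph V)
    (hconn : G.Connected) (huni : G.edgeSet.ncard = Fintype.card V)
    {v : V} (c : G.Walk v v) (hc : c.IsCycle)
    (e f : Sym2 V) (he : e ∈ c.edges) (hf : f ∈ c.edges) (hef : e ≠ f)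
    (hshare : ∃ w : V, w ∈ e ∧ w ∈ f) :
    matchNum (G.deleteEdges {e}) = matchNum G ∨
      matchNum (G.deleteEdges {f}) = matchNum G := by
  obtain ⟨M, hM, hcard⟩ := matchNum_mem G
  by_cases heM : e ∈ M.edgeSet
  · by_cases hfM : f ∈ M.edgeSet
    · exfalso
      obtain ⟨w, hwe, hwf⟩ := hshare
      obtain ⟨u, hu, rfl⟩ := mem_edge_exists M heM hwe
      obtain ⟨u', hu', rfl⟩ := mem_edge_exists M hfM hwf
      obtain ⟨x, -, hx⟩ := hM (M.edge_vert hu)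
      exact hef (by rw [hx u hu, hx u' hu'])
    · exact Or.inr (matchNum_del_eq G f M hM hcard hfM)
  · exact Or.inl (matchNum_del_eq G e M hM hcard heM)
end

section
/- Let G be a connected unicyclic graph on n vertices. Then α(G) + μ(G) = n − 1 if and only if every edge of its unique cycle C is α-critical (i.e., α(G − e) > α(G) for all e ∈ E(C)). -/
section Helpers

open SimpleGraph

variable {V : Type*}

lemma indep_bdd [Fintype V] (G : SimpleGraph V) :
    BddAbove {n | ∃ s : Set V, G.IsIndepSet' s ∧ s.ncard = n} := by
  refine ⟨Fintype.card V, ?_⟩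
  rintro k ⟨t, -, rfl⟩
  simpa [Set.ncard_univ, Nat.card_eq_fintype_card] using
    Set.ncard_le_ncard (Set.subset_univ t) Set.finite_univ

lemma indep_ncard_le [Fintype V] (G : SimpleGraph V) {s : Set V}
    (hs : G.IsIndepSet' s) : s.ncard ≤ _root_.indepNum G :=
  le_csSup (indep_bdd G) ⟨s, hs, rfl⟩

lemma exists_max_indep [Fintype V] (G : SimpleGraph V) :
    ∃ s : Set V, G.IsIndepSet' s ∧ s.ncard = _root_.indepNum G := by
  have h0 : 0 ∈ {n | ∃ s : Set V, G.IsIndepSet' s ∧ s.ncard = n} :=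
    ⟨∅, by simp [SimpleGraph.IsIndepSet'], by simp⟩
  exact Nat.sSup_mem ⟨0, h0⟩ (indep_bdd G)

lemma match_bdd [Fintype V] (G : SimpleGraph V) :
    BddAbove {n | ∃ M : SimpleGraph.Subgraph G, M.IsMatching ∧ M.edgeSet.ncard = n} := by
  classical
  refine ⟨(Set.univ : Set (Sym2 V)).ncard, ?_⟩
  rintro k ⟨M, -, rfl⟩
  exact Set.ncard_le_ncard (Set.subset_univ _) Set.finite_univ

lemma match_ncard_le [Fintype V] (G : SimpleGraph V) {M : Subgraph G}
    (hM : M.IsMatching) : M.edgeSet.ncard ≤ matchNum G :=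
  le_csSup (match_bdd G) ⟨M, hM, rfl⟩

lemma exists_max_match [Fintype V] (G : SimpleGraph V) :
    ∃ M : Subgraph G, M.IsMatching ∧ M.edgeSet.ncard = matchNum G := by
  have h0 : 0 ∈ {n | ∃ M : SimpleGraph.Subgraph G, M.IsMatching ∧ M.edgeSet.ncard = n} :=
    ⟨⊥, by intro v hv; simp at hv, by simp⟩
  exact Nat.sSup_mem ⟨0, h0⟩ (match_bdd G)

/-- Transfer a matching of `H` to a matching of `G ≥ H` with the same edge set. -/
lemma match_transfer {H G : SimpleGraph V} (h : H ≤ G) (M : Subgraph H) (hM : M.IsMatching) :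
    ∃ N : Subgraph G, N.IsMatching ∧ N.edgeSet = M.edgeSet := by
  refine ⟨⟨M.verts, M.Adj, fun hab => h (M.adj_sub hab), M.edge_vert, M.symm⟩, ?_, rfl⟩
  exact hM

lemma matchNum_mono [Fintype V] {H G : SimpleGraph V} (h : H ≤ G) :
    matchNum H ≤ matchNum G := by
  obtain ⟨M, hM, hcard⟩ := exists_max_match H
  obtain ⟨N, hN, hNe⟩ := match_transfer h M hM
  rw [← hcard, ← hNe]
  exact match_ncard_le G hN

/-- A matching avoiding an edge transfers below `deleteEdges`. -/
lemma match_transfer_delete {G : SimpleGraph V} (M : Subgraph G) (hM : M.IsMatching)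
    {e : Sym2 V} (he : e ∉ M.edgeSet) :
    ∃ N : Subgraph (G.deleteEdges {e}), N.IsMatching ∧ N.edgeSet = M.edgeSet := by
  refine ⟨⟨M.verts, M.Adj, fun {a b} hab => ?_, M.edge_vert, M.symm⟩, hM, rfl⟩
  rw [deleteEdges_adj]
  refine ⟨M.adj_sub hab, fun hmem => he ?_⟩
  rw [Set.mem_singleton_iff] at hmem
  rw [← hmem]
  exact Subgraph.mem_edgeSet.mpr hab

lemma alpha_mu_le_card [Fintype V] (G : SimpleGraph V) :
    _root_.indepNum G + matchNum G ≤ Fintype.card V := by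
  classical
  obtain ⟨A, hA, hAcard⟩ := exists_max_indep G
  obtain ⟨M, hM, hMcard⟩ := exists_max_match G
  have hch : ∀ e : Sym2 V, e ∈ M.edgeSet → ∃ v, v ∈ e ∧ v ∉ A := by
    intro e
    induction e using Sym2.ind with
    | _ a b =>
      intro he
      have hadj : G.Adj a b := M.adj_sub (Subgraph.mem_edgeSet.mp he)
      by_contra hcon
      push_neg at hcon
      have ha : a ∈ A := hcon a (Sym2.mem_mk_left a b)
      have hb : b ∈ A := hcon b (Sym2.mem_mk_right a b)
      exact hA ha hb hadj.ne hadj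
  set g : Sym2 V → V := fun e =>
    if h : ∃ v, v ∈ e ∧ v ∉ A then h.choose else e.out.1 with hg
  have hgmem : ∀ e ∈ M.edgeSet, g e ∈ e ∧ g e ∉ A := by
    intro e he
    have h := hch e he
    simp only [hg, dif_pos h]
    exact h.choose_spec
  have hadjg : ∀ e ∈ M.edgeSet, ∀ (hv : g e ∈ e), M.Adj (g e) (Sym2.Mem.other hv) := by
    intro e he hv
    rw [← Subgraph.mem_edgeSet, Sym2.other_spec hv]
    exact he
  have hinj : Set.InjOn g M.edgeSet := by
    intro e₁ he₁ e₂ he₂ heq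
    have h₁ := (hgmem e₁ he₁).1
    have h₂' : g e₁ ∈ e₂ := heq ▸ (hgmem e₂ he₂).1
    have hM1 := hadjg e₁ he₁ h₁
    have hM2 : M.Adj (g e₁) (Sym2.Mem.other h₂') := by
      rw [← Subgraph.mem_edgeSet, Sym2.other_spec h₂']
      exact he₂
    obtain ⟨w, -, hw⟩ := hM (M.edge_vert hM1)
    have heo : Sym2.Mem.other h₁ = Sym2.Mem.other h₂' := by
      rw [hw _ hM1, hw _ hM2]
    rw [← Sym2.other_spec h₁, ← Sym2.other_spec h₂', heo]
  have himg : g '' M.edgeSet ⊆ Set.univ \ A := by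
    rintro v ⟨e, he, rfl⟩
    exact ⟨Set.mem_univ _, (hgmem e he).2⟩
  have h1 : M.edgeSet.ncard ≤ (Set.univ \ A : Set V).ncard := by
    rw [← Set.ncard_image_of_injOn hinj]
    exact Set.ncard_le_ncard himg (Set.finite_univ.diff)
  have h2 : (Set.univ \ A : Set V).ncard = Fintype.card V - A.ncard := by
    rw [Set.ncard_diff (Set.subset_univ A) (Set.toFinite A), Set.ncard_univ,
      Nat.card_eq_fintype_card]
  have h3 : A.ncard ≤ Fintype.card V := by
    simpa [Set.ncard_univ, Nat.card_eq_fintype_card] using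
      Set.ncard_le_ncard (Set.subset_univ A) Set.finite_univ
  omega

lemma preconn_del {H : SimpleGraph V} {x y : V} (hp : H.Preconnected)
    (hr : (H.deleteEdges {s(x, y)}).Reachable x y) :
    (H.deleteEdges {s(x, y)}).Preconnected := by
  intro a b
  obtain ⟨p⟩ := hp a b
  induction p with
  | nil => exact Reachable.refl _
  | cons h q ih =>
    refine Reachable.trans ?_ ih
    rename_i u c _
    by_cases hcase : s(u, c) = s(x, y)
    · rw [Sym2.eq, Sym2.rel_iff'] at hcase
      rcases hcase with ⟨rfl, rfl⟩ | ⟨rfl, rfl⟩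
      · exact hr
      · exact hr.symm
    · refine Adj.reachable ?_
      rw [deleteEdges_adj]
      exact ⟨h, by simpa using hcase⟩

lemma delete_conn {H : SimpleGraph V} (hconn : H.Connected) {u : V} (c : H.Walk u u)
    (hc : c.IsCycle) {e : Sym2 V} (he : e ∈ c.edges) :
    (H.deleteEdges {e}).Connected := by
  revert he
  induction e using Sym2.ind with
  | _ x y =>
    intro he
    have hreach := (adj_and_reachable_delete_edges_iff_exists_cycle.mpr ⟨u, c, hc, he⟩).2
    haveI := hconn.nonempty
    exact Connected.mk (preconn_del hconn.preconnected hreach)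

lemma cycle_edges_nonempty {H : SimpleGraph V} {u : V} {c : H.Walk u u} (hc : c.IsCycle) :
    ∃ e, e ∈ c.edges := by
  have h3 := hc.three_le_length
  have : c.edges.length = c.length := c.length_edges
  cases he : c.edges with
  | nil => rw [he] at this; simp at this; omega
  | cons e l => exact ⟨e, List.mem_cons_self⟩

lemma card_le_of_connected [Fintype V] (H : SimpleGraph V) (hconn : H.Connected) :
    Fintype.card V ≤ H.edgeSet.ncard + 1 := by
  classical
  suffices h : ∀ (k : ℕ) (H : SimpleGraph V), H.edgeSet.ncard = k → H.Connected →
      Fintype.card V ≤ k + 1 from h _ H rfl hconn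
  intro k
  induction k using Nat.strong_induction_on with
  | _ k ih =>
    intro H hk hconn
    by_cases ha : H.IsAcyclic
    · have ht : H.IsTree := ⟨hconn, ha⟩
      haveI : Fintype H.edgeSet := Fintype.ofFinite _
      have hcard := ht.card_edgeFinset
      have hpos : 0 < Fintype.card V := by
        haveI := hconn.nonempty
        exact Fintype.card_pos
      have : H.edgeSet.ncard = H.edgeFinset.card := by
        rw [Set.ncard_eq_toFinset_card']
        exact congrArg Finset.card (by ext; simp)
      omega
    · rw [IsAcyclic] at ha
      push_neg at ha
      obtain ⟨w, cw, hcw⟩ := ha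
      obtain ⟨e, he⟩ := cycle_edges_nonempty hcw
      have heG : e ∈ H.edgeSet := cw.edges_subset_edgeSet he
      have hconn' := delete_conn hconn cw hcw he
      have hcard' : (H.deleteEdges {e}).edgeSet.ncard = k - 1 := by
        rw [edgeSet_deleteEdges]
        rw [← hk]
        rw [← Set.ncard_diff_singleton_add_one heG (Set.toFinite _)]
        omega
      have hkpos : 1 ≤ k := by
        rw [← hk]
        exact Set.ncard_pos (Set.toFinite _) |>.mpr ⟨e, heG⟩
      have := ih (k - 1) (by omega) _ hcard' hconn'
      omega

lemma acyclic_of_sparse [Fintype V] (H : SimpleGraph V) (hconn : H.Connected)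
    (hcard : H.edgeSet.ncard + 1 ≤ Fintype.card V) : H.IsAcyclic := by
  intro w cw hcw
  obtain ⟨e, he⟩ := cycle_edges_nonempty hcw
  have heG : e ∈ H.edgeSet := cw.edges_subset_edgeSet he
  have hconn' := delete_conn hconn cw hcw he
  have h1 := card_le_of_connected _ hconn'
  have hcard' : (H.deleteEdges {e}).edgeSet.ncard + 1 = H.edgeSet.ncard := by
    rw [edgeSet_deleteEdges]
    exact Set.ncard_diff_singleton_add_one heG (Set.toFinite _)
  omega

lemma exists_leaf [Fintype V] {H : SimpleGraph V} (hH : H.IsAcyclic) {s : Set V}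
    (hs : s.Nonempty) :
    ∃ u ∈ s, ∀ w₁ w₂, w₁ ∈ s → w₂ ∈ s → H.Adj u w₁ → H.Adj u w₂ → w₁ = w₂ := by
  classical
  obtain ⟨u₀, hu₀⟩ := hs
  set L := {n | ∃ (x : V) (y : V) (p : H.Walk x y),
      p.IsPath ∧ (∀ z ∈ p.support, z ∈ s) ∧ p.length = n} with hL
  have hne : L.Nonempty := ⟨0, u₀, u₀, Walk.nil, Walk.IsPath.nil, by simp [hu₀], rfl⟩
  have hbdd : BddAbove L := by
    refine ⟨Fintype.card V, ?_⟩
    rintro n ⟨x, y, p, hp, -, rfl⟩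
    exact hp.length_lt.le
  obtain ⟨x, y, p, hp, hsup, hlen⟩ := Nat.sSup_mem hne hbdd
  refine ⟨x, hsup x p.start_mem_support, ?_⟩
  intro w₁ w₂ h1s h2s ha1 ha2
  by_contra hne12
  -- every neighbor in s of x lies on p's support
  have hstep : ∀ w, w ∈ s → H.Adj x w → w ∈ p.support := by
    intro w hws hadj
    by_contra hwp
    have hpath : (Walk.cons hadj.symm p).IsPath := by
      rw [Walk.cons_isPath_iff]
      exact ⟨hp, hwp⟩
    have hmem : (Walk.cons hadj.symm p).length ∈ L := by
      refine ⟨w, y, _, hpath, ?_, rfl⟩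
      intro z hz
      rw [Walk.support_cons, List.mem_cons] at hz
      rcases hz with rfl | hz
      · exact hws
      · exact hsup z hz
    have := le_csSup hbdd hmem
    rw [Walk.length_cons, hlen] at this
    omega
  have hw₁ := hstep w₁ h1s ha1
  have hw₂ := hstep w₂ h2s ha2
  -- p cannot be nil
  cases p with
  | nil =>
    rw [Walk.support_nil, List.mem_singleton] at hw₁
    exact ha1.ne' hw₁
  | cons h q =>
    rename_i z
    -- pick w among w₁ w₂ with w ≠ z
    have hkey : ∀ w, w ∈ s → H.Adj x w → w ≠ z → False := by
      intro w hws hadj hwz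
      have hwsup : w ∈ q.support := by
        have := hstep w hws hadj
        rw [Walk.support_cons, List.mem_cons] at this
        rcases this with rfl | h'
        · exact absurd rfl hadj.ne
        · exact h'
      have hq : q.IsPath := hp.of_cons
      have hxq : x ∉ q.support := by
        rw [Walk.cons_isPath_iff] at hp
        exact hp.2
      set r := q.takeUntil w hwsup with hr
      have hrp : r.IsPath := hq.takeUntil hwsup
      have hxr : x ∉ r.support := fun hx => hxq (Walk.support_takeUntil_subset q hwsup hx)
      have hp1 : (Walk.cons h r).IsPath := by
        rw [Walk.cons_isPath_iff]
        exact ⟨hrp, hxr⟩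
      have hedge : s(x, w) ∉ (Walk.cons h r).edges := by
        rw [Walk.edges_cons, List.mem_cons]
        rintro (heq | hmem)
        · rw [Sym2.eq_iff] at heq
          rcases heq with ⟨-, h1⟩ | ⟨h1, h2⟩
          · exact hwz h1
          · exact hadj.ne h2.symm
        · exact hxr (Walk.fst_mem_support_of_mem_edges r hmem)
      have hcyc := Path.cons_isCycle ⟨Walk.cons h r, hp1⟩ hadj.symm (by
        simpa [Sym2.eq_swap] using hedge)
      exact hH _ hcyc
    by_cases h1z : w₁ = z
    · exact hkey w₂ h2s ha2 (fun h2z => hne12 (h1z.trans h2z.symm))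
    · exact hkey w₁ h1s ha1 h1z

lemma forest_bound [Fintype V] {H : SimpleGraph V} (hH : H.IsAcyclic) (s : Set V) :
    ∃ (A : Set V) (M : H.Subgraph), H.IsIndepSet' A ∧ M.IsMatching ∧ A ⊆ s ∧
      M.verts ⊆ s ∧ s.ncard ≤ A.ncard + M.edgeSet.ncard := by
  classical
  suffices hgen : ∀ (n : ℕ) (s : Set V), s.ncard = n →
      ∃ (A : Set V) (M : H.Subgraph), H.IsIndepSet' A ∧ M.IsMatching ∧ A ⊆ s ∧
        M.verts ⊆ s ∧ s.ncard ≤ A.ncard + M.edgeSet.ncard from hgen _ s rfl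
  intro n
  induction n using Nat.strong_induction_on with
  | _ n ih =>
    intro s hs
    rcases Nat.eq_zero_or_pos n with rfl | hpos
    · exact ⟨∅, ⊥, by simp [SimpleGraph.IsIndepSet'], by intro v hv; simp at hv,
        Set.empty_subset s, by simp, by omega⟩
    have hsne : s.Nonempty := by
      rw [← Set.ncard_pos (Set.toFinite s)] at *
      omega
    obtain ⟨u, hus, hleaf⟩ := exists_leaf hH hsne
    by_cases hnb : ∃ w ∈ s, H.Adj u w
    · obtain ⟨w, hws, hadj⟩ := hnb
      have hne : u ≠ w := hadj.ne
      set s' := s \ {u, w} with hs'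
      have hsub : ({u, w} : Set V) ⊆ s := by
        rintro z (rfl | rfl)
        exacts [hus, hws]
      have hcard2 : ({u, w} : Set V).ncard = 2 := Set.ncard_pair hne
      have hs'card : s'.ncard = n - 2 := by
        rw [hs', Set.ncard_diff hsub (Set.toFinite _), hcard2, hs]
      have h2n : 2 ≤ n := by
        rw [← hs, ← hcard2]
        exact Set.ncard_le_ncard hsub (Set.toFinite s)
      obtain ⟨A', M', hA'i, hM'm, hA's, hM's, hbound⟩ := ih (n - 2) (by omega) s' hs'card
      -- independent set: insert u
      have huA' : u ∉ A' := fun h => (hA's h).2 (by simp)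
      have hAind : H.IsIndepSet' (insert u A') := by
        rw [SimpleGraph.IsIndepSet',
          (haveI : Std.Symm (fun a b => ¬H.Adj a b) := ⟨fun a b (hab : ¬H.Adj a b) => fun h => hab h.symm⟩; Set.pairwise_insert_of_symm)]
        refine ⟨hA'i, ?_⟩
        intro b hb _ hAdj
        have hbs : b ∈ s := (hA's hb).1
        have := hleaf b w hbs hws hAdj hadj
        exact (hA's hb).2 (by simp [this])
      -- matching: M' ⊔ edge u w
      have hdisj : Disjoint M'.support (H.subgraphOfAdj hadj).support := by
        rw [hM'm.support_eq_verts, (Subgraph.IsMatching.subgraphOfAdj hadj).support_eq_verts,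
          subgraphOfAdj_verts]
        rw [Set.disjoint_left]
        intro a haM (h : a ∈ ({u, w} : Set V))
        exact (hM's haM).2 h
      have hMm : (M' ⊔ H.subgraphOfAdj hadj).IsMatching :=
        hM'm.sup (Subgraph.IsMatching.subgraphOfAdj hadj) hdisj
      refine ⟨insert u A', M' ⊔ H.subgraphOfAdj hadj, hAind, hMm, ?_, ?_, ?_⟩
      · intro z hz
        rcases hz with rfl | hz
        · exact hus
        · exact (hA's hz).1
      · rw [Subgraph.verts_sup, subgraphOfAdj_verts]
        intro z hz
        rcases hz with hz | hz
        · exact (hM's hz).1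
        · exact hsub hz
      · have hAcard : (insert u A').ncard = A'.ncard + 1 :=
          Set.ncard_insert_of_notMem huA' (Set.toFinite _)
        have hecard : (M' ⊔ H.subgraphOfAdj hadj).edgeSet.ncard = M'.edgeSet.ncard + 1 := by
          rw [Subgraph.edgeSet_sup, SimpleGraph.edgeSet_subgraphOfAdj hadj]
          rw [Set.union_comm, Set.singleton_union]
          refine Set.ncard_insert_of_notMem (fun hmem => ?_) (Set.toFinite _)
          have : u ∈ M'.verts := M'.edge_vert (Subgraph.mem_edgeSet.mp hmem)
          exact (hM's this).2 (by simp)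
        rw [hAcard, hecard, hs]
        omega
    · push_neg at hnb
      set s' := s \ {u} with hs'
      have hs'card : s'.ncard = n - 1 := by
        rw [hs', Set.ncard_diff (by simpa using hus) (Set.toFinite _), hs]
        simp
      obtain ⟨A', M', hA'i, hM'm, hA's, hM's, hbound⟩ := ih (n - 1) (by omega) s' hs'card
      have huA' : u ∉ A' := fun h => (hA's h).2 (by simp)
      have hAind : H.IsIndepSet' (insert u A') := by
        rw [SimpleGraph.IsIndepSet',
          (haveI : Std.Symm (fun a b => ¬H.Adj a b) := ⟨fun a b (hab : ¬H.Adj a b) => fun h => hab h.symm⟩; Set.pairwise_insert_of_symm)]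
        refine ⟨hA'i, ?_⟩
        intro b hb _ hAdj
        exact hnb b (hA's hb).1 hAdj
      refine ⟨insert u A', M', hAind, hM'm, ?_, fun z hz => (hM's hz).1, ?_⟩
      · intro z hz
        rcases hz with rfl | hz
        · exact hus
        · exact (hA's hz).1
      · have hAcard : (insert u A').ncard = A'.ncard + 1 :=
          Set.ncard_insert_of_notMem huA' (Set.toFinite _)
        rw [hAcard, hs]
        omega

lemma indep_delete_le [Fintype V] (G : SimpleGraph V) (e : Sym2 V) :
    _root_.indepNum (G.deleteEdges {e}) ≤ _root_.indepNum G + 1 := by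
  induction e using Sym2.ind with
  | _ x y =>
    obtain ⟨A, hAi, hAcard⟩ := exists_max_indep (G.deleteEdges {s(x, y)})
    have hind : G.IsIndepSet' (A \ {x}) := by
      intro a ha b hb hab hadj
      have hH : (G.deleteEdges {s(x, y)}).Adj a b := by
        rw [deleteEdges_adj]
        refine ⟨hadj, fun hmem => ?_⟩
        rw [Set.mem_singleton_iff, Sym2.eq_iff] at hmem
        rcases hmem with ⟨h1, -⟩ | ⟨-, h2⟩
        · exact ha.2 h1
        · exact hb.2 h2
      exact hAi ha.1 hb.1 hab hH
    have hsub : A ⊆ insert x (A \ {x}) := by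
      rw [Set.insert_diff_singleton]
      exact Set.subset_insert x A
    have h1 : A.ncard ≤ (A \ {x}).ncard + 1 :=
      le_trans (Set.ncard_le_ncard hsub (Set.toFinite _)) (Set.ncard_insert_le _ _)
    have h2 := indep_ncard_le G hind
    omega

lemma matching_misses_cycle_edge {G : SimpleGraph V} {v : V} {c : G.Walk v v}
    (hc : c.IsCycle) {M : Subgraph G} (hM : M.IsMatching) :
    ∃ e ∈ c.edges, e ∉ M.edgeSet := by
  cases c with
  | nil => exact absurd hc Walk.IsCycle.not_of_nil
  | cons h q =>
    rename_i b
    by_contra hcon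
    push_neg at hcon
    have h1 : s(v, b) ∈ M.edgeSet := hcon _ (by rw [Walk.edges_cons]; exact List.mem_cons_self)
    have hlen := hc.three_le_length
    rw [Walk.length_cons] at hlen
    have hqd : q.darts ≠ [] := by
      have hl : q.darts.length = q.length := q.length_darts
      intro hnil
      rw [hnil] at hl
      simp at hl
      omega
    set d := q.darts.getLast hqd with hd
    have hdsnd : d.snd = v := by rw [hd, SimpleGraph.Walk.getLast_darts_eq_lastDart]; rfl
    have hdmem : d ∈ q.darts := List.getLast_mem hqd
    have hedge : d.edge ∈ q.edges := List.mem_map_of_mem hdmem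
    have h2 : d.edge ∈ M.edgeSet :=
      hcon _ (by rw [Walk.edges_cons]; exact List.mem_cons_of_mem _ hedge)
    have hde : d.edge = s(d.fst, v) := by rw [← hdsnd]; rfl
    have hadj1 : M.Adj v b := Subgraph.mem_edgeSet.mp h1
    have hadj2 : M.Adj v d.fst := (Subgraph.mem_edgeSet.mp (by rwa [hde] at h2)).symm
    obtain ⟨wv, -, hw⟩ := hM (M.edge_vert hadj1)
    have hb : b = d.fst := by rw [hw _ hadj1, hw _ hadj2]
    have hnodup := hc.isTrail.edges_nodup
    rw [Walk.edges_cons] at hnodup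
    have hmem : s(v, b) ∈ q.edges := by
      have : s(v, b) = d.edge := by rw [hde, hb, Sym2.eq_swap]
      rw [this]
      exact hedge
    exact (List.nodup_cons.mp hnodup).1 hmem

end Helpers

theorem stmt7 {V : Type*} [Fintype V] (G : SimpleGraph V)
    (hconn : G.Connected) (huni : G.edgeSet.ncard = Fintype.card V)
    {v : V} (c : G.Walk v v) (hc : c.IsCycle) :
    indepNum G + matchNum G = Fintype.card V - 1 ↔
      ∀ e ∈ c.edges, indepNum G < indepNum (G.deleteEdges {e}) := by
  classical
  have hn3 : 3 ≤ Fintype.card V := by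
    have h3 := hc.three_le_length
    have hnodup : c.support.tail.Nodup := hc.support_nodup
    have hlen : c.support.tail.length = c.length := by
      have := c.length_support
      have := c.support.length_tail
      omega
    have hle : c.support.tail.length ≤ Fintype.card V := hnodup.length_le_card
    omega
  have hkey : ∀ e ∈ c.edges,
      indepNum (G.deleteEdges {e}) + matchNum (G.deleteEdges {e}) = Fintype.card V ∧
      matchNum (G.deleteEdges {e}) ≤ matchNum G ∧
      indepNum (G.deleteEdges {e}) ≤ indepNum G + 1 := by
    intro e he
    have heG : e ∈ G.edgeSet := c.edges_subset_edgeSet he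
    have hconn' := delete_conn hconn c hc he
    have hcard' : (G.deleteEdges {e}).edgeSet.ncard + 1 = Fintype.card V := by
      rw [SimpleGraph.edgeSet_deleteEdges, Set.ncard_diff_singleton_add_one heG (Set.toFinite _), huni]
    have hacyc := acyclic_of_sparse _ hconn' (by omega)
    have hsum_ge : Fintype.card V ≤
        indepNum (G.deleteEdges {e}) + matchNum (G.deleteEdges {e}) := by
      obtain ⟨A, M, hAi, hMm, -, -, hb⟩ := forest_bound hacyc Set.univ
      calc Fintype.card V = (Set.univ : Set V).ncard := by
            rw [Set.ncard_univ, Nat.card_eq_fintype_card]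
        _ ≤ A.ncard + M.edgeSet.ncard := hb
        _ ≤ _ := add_le_add (indep_ncard_le _ hAi) (match_ncard_le _ hMm)
    have hsum_le := alpha_mu_le_card (G.deleteEdges {e})
    exact ⟨le_antisymm hsum_le hsum_ge, matchNum_mono (SimpleGraph.deleteEdges_le _),
      indep_delete_le G e⟩
  constructor
  · intro hsum e he
    obtain ⟨h1, h2, -⟩ := hkey e he
    omega
  · intro hcrit
    obtain ⟨M, hMm, hMcard⟩ := exists_max_match G
    obtain ⟨e, he, heM⟩ := matching_misses_cycle_edge hc hMm
    obtain ⟨h1, h2, h3⟩ := hkey e he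
    have hge : matchNum G ≤ matchNum (G.deleteEdges {e}) := by
      obtain ⟨N, hNm, hNe⟩ := match_transfer_delete M hMm heM
      rw [← hMcard, ← hNe]
      exact match_ncard_le _ hNm
    have hc' := hcrit e he
    have hle := alpha_mu_le_card G
    omega
end

section
/- If G is a König–Egerváry graph (i.e., α(G) + μ(G) = |V(G)|), then every maximum matching of G matches N(core(G)) into core(G); that is, for every maximum matching M, each vertex of N(core(G)) is matched by M to a vertex of core(G). -/
lemma exists_maxIndepSet {V : Type*} [Fintype V] (G : SimpleGraph V) :
    ∃ S : Set V, IsMaxIndepSet G S := by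
  have hne : (0 : ℕ) ∈ {n | ∃ s : Set V, G.IsIndepSet' s ∧ s.ncard = n} :=
    ⟨∅, by simp [SimpleGraph.IsIndepSet'], Set.ncard_empty _⟩
  have hbdd : BddAbove {n | ∃ s : Set V, G.IsIndepSet' s ∧ s.ncard = n} := by
    refine ⟨Fintype.card V, fun n hn => ?_⟩
    obtain ⟨s, _, hs⟩ := hn
    calc n = s.ncard := hs.symm
    _ ≤ (Set.univ : Set V).ncard := Set.ncard_le_ncard (Set.subset_univ s) Set.finite_univ
    _ = Fintype.card V := by simp [Set.ncard_univ, Nat.card_eq_fintype_card]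
  obtain ⟨S, hS1, hS2⟩ := Nat.sSup_mem ⟨0, hne⟩ hbdd
  exact ⟨S, hS1, hS2⟩

lemma key_matched {V : Type*} [Fintype V] (G : SimpleGraph V)
    (hKE : indepNum G + matchNum G = Fintype.card V)
    (M : SimpleGraph.Subgraph G) (hM : M.IsMatching) (hMcard : M.edgeSet.ncard = matchNum G)
    {S : Set V} (hS : IsMaxIndepSet G S) {v : V} (hv : v ∉ S) :
    ∃ w ∈ S, M.Adj v w := by
  classical
  set g : Sym2 V → V := fun e => if h : ∃ a, a ∈ e ∧ a ∉ S then h.choose else v with hgdef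
  have hex : ∀ e ∈ M.edgeSet, ∃ a, a ∈ e ∧ a ∉ S := by
    intro e he
    induction e using Sym2.ind with
    | _ a b =>
      rw [SimpleGraph.Subgraph.mem_edgeSet] at he
      by_contra hc
      push_neg at hc
      have ha : a ∈ S := hc a (by simp)
      have hb : b ∈ S := hc b (by simp)
      exact hS.1 ha hb (M.adj_sub he).ne (M.adj_sub he)
  have hg : ∀ e ∈ M.edgeSet, g e ∈ e ∧ g e ∉ S := by
    intro e he
    have h := hex e he
    simp only [hgdef, dif_pos h]
    exact h.choose_spec
  have huniq : ∀ (x : V) (e₁ e₂ : Sym2 V), e₁ ∈ M.edgeSet → e₂ ∈ M.edgeSet →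
      x ∈ e₁ → x ∈ e₂ → e₁ = e₂ := by
    intro x e₁ e₂ h1 h2 hx1 hx2
    obtain ⟨y₁, rfl⟩ := Sym2.mem_iff_exists.mp hx1
    obtain ⟨y₂, rfl⟩ := Sym2.mem_iff_exists.mp hx2
    rw [SimpleGraph.Subgraph.mem_edgeSet] at h1 h2
    obtain ⟨w, _, huni⟩ := hM (M.edge_vert h1)
    rw [huni y₁ h1, huni y₂ h2]
  have hinj : Set.InjOn g M.edgeSet := by
    intro e₁ h1 e₂ h2 heq
    exact huniq (g e₁) e₁ e₂ h1 h2 (hg e₁ h1).1 (heq ▸ (hg e₂ h2).1)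
  have hsub : g '' M.edgeSet ⊆ Sᶜ := by
    rintro x ⟨e, he, rfl⟩
    exact (hg e he).2
  have hcompl : (Sᶜ : Set V).ncard = matchNum G := by
    have h1 : S.ncard + (Sᶜ : Set V).ncard = Fintype.card V := by
      rw [Set.ncard_add_ncard_compl, Nat.card_eq_fintype_card]
    have h2 : S.ncard = indepNum G := hS.2
    omega
  have himg : g '' M.edgeSet = Sᶜ := by
    apply Set.eq_of_subset_of_ncard_le hsub _ (Set.toFinite _)
    rw [Set.ncard_image_of_injOn hinj, hMcard, hcompl]
  have hvmem : v ∈ g '' M.edgeSet := himg ▸ hv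
  obtain ⟨e, he, hge⟩ := hvmem
  have hve : v ∈ e := hge ▸ (hg e he).1
  obtain ⟨w, rfl⟩ := Sym2.mem_iff_exists.mp hve
  rw [SimpleGraph.Subgraph.mem_edgeSet] at he
  refine ⟨w, ?_, he⟩
  by_contra hw
  have hwmem : w ∈ g '' M.edgeSet := himg ▸ hw
  obtain ⟨e', he', hge'⟩ := hwmem
  have hwe' : w ∈ e' := hge' ▸ (hg e' he').1
  have : e' = s(v, w) := huniq w e' s(v, w) he'
    (SimpleGraph.Subgraph.mem_edgeSet.mpr he) hwe' (by simp)
  rw [this] at hge'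
  exact (M.adj_sub he).ne (hge.symm.trans hge')

theorem stmt11 {V : Type*} [Fintype V] (G : SimpleGraph V)
    (hKE : indepNum G + matchNum G = Fintype.card V) :
    ∀ M : SimpleGraph.Subgraph G, M.IsMatching → M.edgeSet.ncard = matchNum G →
      ∀ v ∈ nbhdSet G (core G), ∃ w ∈ core G, M.Adj v w := by
  intro M hM hMcard v hv
  obtain ⟨u, hu, hadj⟩ := hv
  have hvnot : ∀ S : Set V, IsMaxIndepSet G S → v ∉ S := by
    intro S hS hvS
    have huS : u ∈ S := hu S hS
    exact hS.1 hvS huS hadj.ne hadj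
  obtain ⟨S₀, hS₀⟩ := exists_maxIndepSet G
  obtain ⟨w, hwS₀, hMvw⟩ := key_matched G hKE M hM hMcard hS₀ (hvnot S₀ hS₀)
  refine ⟨w, ?_, hMvw⟩
  intro S hS
  obtain ⟨w', hw'S, hMvw'⟩ := key_matched G hKE M hM hMcard hS (hvnot S hS)
  obtain ⟨w₀, _, huni⟩ := hM (M.edge_vert hMvw)
  rwa [huni w hMvw, ← huni w' hMvw']
end

section
/- In any graph G, no α-critical edge has an endpoint in N[core(G)]. -/
theorem stmt13 {V : Type*} [Fintype V] (G : SimpleGraph V) (u v : V)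
    (h : G.Adj u v) (hcrit : indepNum G < indepNum (G.deleteEdges {s(u,v)})) :
    u ∉ closedNbhdSet G (core G) ∧ v ∉ closedNbhdSet G (core G) := by
  classical
  set G' := G.deleteEdges {s(u,v)} with hG'
  have hbdd : ∀ (H : SimpleGraph V), BddAbove {n | ∃ s : Set V, H.IsIndepSet' s ∧ s.ncard = n} := by
    intro H
    refine ⟨Fintype.card V, ?_⟩
    rintro n ⟨s, -, rfl⟩
    calc s.ncard ≤ (Set.univ : Set V).ncard := Set.ncard_le_ncard (Set.subset_univ s) (Set.toFinite _)
      _ = Fintype.card V := by simp [Set.ncard_univ]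
  have hmem : ∀ (H : SimpleGraph V) (s : Set V), H.IsIndepSet' s → s.ncard ≤ indepNum H := by
    intro H s hs
    exact le_csSup (hbdd H) ⟨s, hs, rfl⟩
  have hne : ({n | ∃ s : Set V, G'.IsIndepSet' s ∧ s.ncard = n}).Nonempty :=
    ⟨0, ∅, by simp [SimpleGraph.IsIndepSet'], by simp⟩
  obtain ⟨S, hSind, hScard⟩ : ∃ s : Set V, G'.IsIndepSet' s ∧ s.ncard = indepNum G' :=
    Nat.sSup_mem hne (hbdd G')
  have hne_uv : u ≠ v := h.ne
  -- any pair in S adjacent in G must be {u,v}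
  have key : ∀ a ∈ S, ∀ b ∈ S, a ≠ b → G.Adj a b → (a = u ∧ b = v) ∨ (a = v ∧ b = u) := by
    intro a ha b hb hab hadj
    have hnadj := hSind ha hb hab
    rw [hG', SimpleGraph.deleteEdges_adj] at hnadj
    have : s(a,b) ∈ ({s(u,v)} : Set (Sym2 V)) := by
      by_contra hc
      exact hnadj ⟨hadj, hc⟩
    simp only [Set.mem_singleton_iff, Sym2.eq_iff] at this
    exact this
  -- u and v are both in S
  have huv : u ∈ S ∧ v ∈ S := by
    by_contra hc
    have hSG : G.IsIndepSet' S := by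
      intro a ha b hb hab hadj
      rcases key a ha b hb hab hadj with ⟨rfl, rfl⟩ | ⟨rfl, rfl⟩
      · exact hc ⟨ha, hb⟩
      · exact hc ⟨hb, ha⟩
    have := hmem G S hSG
    rw [hScard] at this
    omega
  obtain ⟨huS, hvS⟩ := huv
  -- removing u or v gives a maximum independent set of G
  have hmax : ∀ x ∈ S, x = u ∨ x = v → IsMaxIndepSet G (S \ {x}) := by
    intro x hxS hx
    have hind : G.IsIndepSet' (S \ {x}) := by
      rintro a ⟨ha, hax⟩ b ⟨hb, hbx⟩ hab hadj
      simp only [Set.mem_singleton_iff] at hax hbx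
      rcases key a ha b hb hab hadj with ⟨rfl, rfl⟩ | ⟨rfl, rfl⟩ <;>
        rcases hx with rfl | rfl <;> simp_all
    have hcard : (S \ {x}).ncard + 1 = S.ncard :=
      Set.ncard_diff_singleton_add_one hxS S.toFinite
    have hle : (S \ {x}).ncard ≤ indepNum G := hmem G _ hind
    have hge : indepNum G ≤ (S \ {x}).ncard := by
      have : S.ncard = indepNum G' := hScard
      omega
    exact ⟨hind, le_antisymm hle hge⟩
  have hcore : ∀ x ∈ S, x = u ∨ x = v → core G ⊆ S \ {x} := by
    intro x hxS hx w hw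
    exact hw (S \ {x}) (hmax x hxS hx)
  -- conclude
  have main : ∀ x y : V, x ∈ S → y ∈ S → x ≠ y → (x = u ∨ x = v) → (y = u ∨ y = v) →
      x ∉ closedNbhdSet G (core G) := by
    intro x y hxS hyS hxy hx hy hmem'
    rcases hmem' with hc | ⟨w, hwcore, hadj⟩
    · exact (hcore x hxS hx hc).2 rfl
    · have hwS : w ∈ S \ {y} := hcore y hyS hy hwcore
      have hxSy : x ∈ S \ {y} := ⟨hxS, hxy⟩
      have := (hmax y hyS hy).1 hxSy hwS hadj.ne
      exact this hadj
  exact ⟨main u v huS hvS hne_uv (Or.inl rfl) (Or.inr rfl),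
    main v u hvS huS hne_uv.symm (Or.inr rfl) (Or.inl rfl)⟩
end

section
/- If G is a connected unicyclic graph on n vertices with α(G) + μ(G) = n − 1 (i.e., G is not a König–Egerváry graph), then no vertex of its unique cycle C belongs to N[core(G)]. -/
set_option linter.unusedSectionVars false
set_option maxHeartbeats 1000000

open SimpleGraph hiding indepNum
open Set

namespace UniHelp

variable {V : Type*} [Fintype V]

lemma indep_set_nonempty (G : SimpleGraph V) :
    {n | ∃ s : Set V, G.IsIndepSet' s ∧ s.ncard = n}.Nonempty :=
  ⟨0, ∅, Set.pairwise_empty _, by simp⟩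

lemma indep_bdd (G : SimpleGraph V) :
    BddAbove {n | ∃ s : Set V, G.IsIndepSet' s ∧ s.ncard = n} := by
  refine ⟨Fintype.card V, ?_⟩
  rintro n ⟨s, -, rfl⟩
  have := Set.ncard_le_ncard (Set.subset_univ s) Set.finite_univ
  simpa [Set.ncard_univ, Nat.card_eq_fintype_card] using this

lemma exists_maxIndep (G : SimpleGraph V) :
    ∃ s : Set V, G.IsIndepSet' s ∧ s.ncard = indepNum G :=
  Nat.sSup_mem (indep_set_nonempty G) (indep_bdd G)

lemma ncard_le_indepNum (G : SimpleGraph V) {s : Set V} (h : G.IsIndepSet' s) :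
    s.ncard ≤ indepNum G :=
  le_csSup (indep_bdd G) ⟨s, h, rfl⟩

lemma match_set_nonempty (G : SimpleGraph V) :
    {n | ∃ M : SimpleGraph.Subgraph G, M.IsMatching ∧ M.edgeSet.ncard = n}.Nonempty :=
  ⟨0, ⊥, by intro v hv; simp at hv, by simp⟩

lemma match_bdd (G : SimpleGraph V) :
    BddAbove {n | ∃ M : SimpleGraph.Subgraph G, M.IsMatching ∧ M.edgeSet.ncard = n} := by
  refine ⟨G.edgeSet.ncard, ?_⟩
  rintro n ⟨M, -, rfl⟩
  exact Set.ncard_le_ncard M.edgeSet_subset (Set.toFinite _)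

lemma exists_maxMatching (G : SimpleGraph V) :
    ∃ M : SimpleGraph.Subgraph G, M.IsMatching ∧ M.edgeSet.ncard = matchNum G :=
  Nat.sSup_mem (match_set_nonempty G) (match_bdd G)

lemma le_matchNum (G : SimpleGraph V) {M : SimpleGraph.Subgraph G} (h : M.IsMatching) :
    M.edgeSet.ncard ≤ matchNum G :=
  le_csSup (match_bdd G) ⟨M, h, rfl⟩

/-- Transfer a subgraph along an inequality of ambient graphs. -/
def ofLE {G H : SimpleGraph V} (hGH : G ≤ H) (M : G.Subgraph) : H.Subgraph where
  verts := M.verts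
  Adj := M.Adj
  adj_sub := fun h => hGH (M.adj_sub h)
  edge_vert := M.edge_vert
  symm := M.symm

lemma ofLE_isMatching {G H : SimpleGraph V} (hGH : G ≤ H) {M : G.Subgraph}
    (hM : M.IsMatching) : (ofLE hGH M).IsMatching := hM

lemma ofLE_edgeSet {G H : SimpleGraph V} (hGH : G ≤ H) (M : G.Subgraph) :
    (ofLE hGH M).edgeSet = M.edgeSet := rfl

lemma ofLE_verts {G H : SimpleGraph V} (hGH : G ≤ H) (M : G.Subgraph) :
    (ofLE hGH M).verts = M.verts := rfl

lemma matchNum_mono {G H : SimpleGraph V} (hGH : G ≤ H) : matchNum G ≤ matchNum H := by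
  apply csSup_le (match_set_nonempty G)
  rintro n ⟨M, hM, rfl⟩
  exact le_csSup (match_bdd H) ⟨ofLE hGH M, ofLE_isMatching hGH hM, rfl⟩

lemma indepNum_mono {G H : SimpleGraph V} (hGH : G ≤ H) : indepNum H ≤ indepNum G := by
  apply csSup_le (indep_set_nonempty H)
  rintro n ⟨s, hs, rfl⟩
  exact ncard_le_indepNum G (fun a ha b hb hab hadj => hs ha hb hab (hGH hadj))




lemma reachable_deleteEdges {G : SimpleGraph V} {x y : V}
    (hxy : (G.deleteEdges {s(x,y)}).Reachable x y) {a b : V} (p : G.Walk a b) :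
    (G.deleteEdges {s(x,y)}).Reachable a b := by
  induction p with
  | nil => exact .refl _
  | @cons u w b h q ih =>
    refine Reachable.trans ?_ ih
    by_cases he : s(u, w) = s(x, y)
    · rw [Sym2.eq_iff] at he
      rcases he with ⟨rfl, rfl⟩ | ⟨rfl, rfl⟩
      · exact hxy
      · exact hxy.symm
    · exact SimpleGraph.Adj.reachable (by simp [SimpleGraph.deleteEdges_adj, h, he])

lemma connected_deleteEdges_of_cycle {G : SimpleGraph V} (hconn : G.Connected)
    {u : V} {c : G.Walk u u} (hc : c.IsCycle) {e : Sym2 V} (he : e ∈ c.edges) :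
    (G.deleteEdges {e}).Connected := by
  induction e using Sym2.ind with
  | _ x y =>
    have hre : (G \ SimpleGraph.fromEdgeSet {s(x,y)}).Reachable x y :=
      (SimpleGraph.adj_and_reachable_delete_edges_iff_exists_cycle.mpr ⟨u, c, hc, he⟩).2
    have hre' : (G.deleteEdges {s(x,y)}).Reachable x y := hre
    haveI : Nonempty V := hconn.nonempty
    exact ⟨fun a b => (hconn.preconnected a b).elim fun p => reachable_deleteEdges hre' p⟩

lemma exists_cycle_of_not_acyclic {G : SimpleGraph V} (h : ¬ G.IsAcyclic) :
    ∃ (u : V) (c : G.Walk u u), c.IsCycle ∧ ∃ e, e ∈ c.edges ∧ e ∈ G.edgeSet := by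
  rw [SimpleGraph.IsAcyclic] at h
  push_neg at h
  obtain ⟨u, c, hc⟩ := h
  refine ⟨u, c, hc, ?_⟩
  cases c with
  | nil => exact absurd rfl hc.ne_nil
  | @cons u w _ h q => exact ⟨s(u,w), List.mem_cons_self, h⟩

lemma ncard_edgeSet_eq_card_edgeFinset (G : SimpleGraph V) [Fintype G.edgeSet] :
    G.edgeSet.ncard = G.edgeFinset.card := by
  rw [SimpleGraph.edgeFinset, Set.ncard_eq_toFinset_card']

lemma card_le_edges_aux :
    ∀ (m : ℕ) (G : SimpleGraph V), G.Connected → G.edgeSet.ncard = m →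
      Fintype.card V ≤ m + 1 := by
  intro m
  induction m using Nat.strong_induction_on with
  | _ m ih =>
    intro G hconn hm
    classical
    by_cases hac : G.IsAcyclic
    · haveI : Fintype G.edgeSet := (Set.toFinite _).fintype
      have htree : G.IsTree := ⟨hconn, hac⟩
      have hcard := htree.card_edgeFinset
      have h2 := ncard_edgeSet_eq_card_edgeFinset G
      omega
    · obtain ⟨u, c, hc, e, hec, heG⟩ := exists_cycle_of_not_acyclic hac
      have hTconn := connected_deleteEdges_of_cycle hconn hc hec
      have hTcard : (G.deleteEdges {e}).edgeSet.ncard = m - 1 := by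
        rw [SimpleGraph.edgeSet_deleteEdges,
          Set.ncard_diff_singleton_of_mem heG, hm]
      have hm1 : 1 ≤ m := by
        have : 0 < G.edgeSet.ncard := (Set.ncard_pos (Set.toFinite _)).mpr ⟨e, heG⟩
        omega
      have := ih (m - 1) (by omega) _ hTconn hTcard
      omega

lemma acyclic_of_connected_card {G : SimpleGraph V} (hconn : G.Connected)
    (hcard : G.edgeSet.ncard + 1 = Fintype.card V) : G.IsAcyclic := by
  by_contra hac
  obtain ⟨u, c, hc, e, hec, heG⟩ := exists_cycle_of_not_acyclic hac
  have hTconn := connected_deleteEdges_of_cycle hconn hc hec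
  have hpos : 0 < G.edgeSet.ncard := (Set.ncard_pos (Set.toFinite _)).mpr ⟨e, heG⟩
  have hTcard : (G.deleteEdges {e}).edgeSet.ncard = G.edgeSet.ncard - 1 := by
    rw [SimpleGraph.edgeSet_deleteEdges,
      Set.ncard_diff_singleton_of_mem heG]
  have := card_le_edges_aux _ _ hTconn hTcard
  omega

lemma exists_leaf {F : SimpleGraph V} (hac : F.IsAcyclic) (hne : F.edgeSet.Nonempty) :
    ∃ u v : V, F.Adj u v ∧ ∀ w, F.Adj u w → w = v := by
  classical
  set S : Set ℕ := {n | ∃ (a b : V) (p : F.Walk a b), p.IsPath ∧ p.length = n} with hS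
  have hbdd : BddAbove S := by
    refine ⟨Fintype.card V, ?_⟩
    rintro n ⟨a, b, p, hp, rfl⟩
    exact hp.length_lt.le
  obtain ⟨x, y, hxy⟩ : ∃ x y, F.Adj x y := by
    obtain ⟨e, he⟩ := hne
    induction e using Sym2.ind with
    | _ x y => exact ⟨x, y, he⟩
  have h1 : 1 ∈ S := ⟨x, y, (SimpleGraph.Path.singleton hxy).1,
    (SimpleGraph.Path.singleton hxy).2, rfl⟩
  have hmem := Nat.sSup_mem ⟨1, h1⟩ hbdd
  obtain ⟨a, b, p, hp, hlen⟩ := hmem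
  have hlen1 : 1 ≤ p.length := by
    rw [hlen]; exact le_csSup hbdd h1
  cases p with
  | nil => simp at hlen1
  | @cons a z b hadj q =>
    refine ⟨a, z, hadj, fun w hw => ?_⟩
    by_contra hwz
    have hwa : w ≠ a := fun h => F.loopless.irrefl a (h ▸ hw)
    rcases (Walk.cons_isPath_iff hadj q).mp hp with ⟨hq, hanotq⟩
    by_cases hws : w ∈ q.support
    · set q' := q.takeUntil w hws with hq'def
      have hq'path : q'.IsPath := hq.takeUntil hws
      have hpath1 : (Walk.cons hadj q').IsPath :=
        hq'path.cons (fun hmem => hanotq (Walk.support_takeUntil_subset _ hws hmem))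
      have hequ := hac.path_unique ⟨Walk.cons hadj q', hpath1⟩ (SimpleGraph.Path.singleton hw)
      have hsup := congrArg (fun P : F.Path a w => P.1.support) hequ
      simp only [SimpleGraph.Path.singleton, Walk.support_cons, Walk.support_nil] at hsup
      rw [Walk.support_eq_cons q'] at hsup
      simp at hsup
      rw [Walk.support_eq_cons q'] at hsup
      exact hwz ((List.cons.inj hsup).1.symm ▸ rfl)
    · have hwp : w ∉ (Walk.cons hadj q).support := by
        rw [Walk.support_cons]
        simp [hwa, hws]
      have hpath2 : (Walk.cons hw.symm (Walk.cons hadj q)).IsPath := hp.cons hwp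
      have hmem2 : (Walk.cons hadj q).length + 1 ∈ S :=
        ⟨w, b, _, hpath2, by simp [Walk.length_cons]⟩
      have := le_csSup hbdd hmem2
      omega




lemma forest_aux :
    ∀ (m : ℕ) (F : SimpleGraph V), F.IsAcyclic → F.edgeSet.ncard = m →
      indepNum F + matchNum F = Fintype.card V := by
  intro m
  induction m using Nat.strong_induction_on with
  | _ m ih =>
  intro F hac hm
  classical
  by_cases hE : F.edgeSet = ∅
  · have hnoadj : ∀ a b : V, ¬F.Adj a b := fun a b h => by
      have : s(a,b) ∈ F.edgeSet := h
      simp [hE] at this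
    have hα : indepNum F = Fintype.card V := by
      apply le_antisymm
      · apply csSup_le (indep_set_nonempty F)
        rintro n ⟨s, -, rfl⟩
        have := Set.ncard_le_ncard (Set.subset_univ s) Set.finite_univ
        simpa [Set.ncard_univ, Nat.card_eq_fintype_card] using this
      · refine le_csSup (indep_bdd F) ⟨Set.univ, fun a _ b _ _ => hnoadj a b, ?_⟩
        rw [Set.ncard_univ, Nat.card_eq_fintype_card]
    have hμ : matchNum F = 0 := by
      refine Nat.le_zero.mp (csSup_le (match_set_nonempty F) ?_)
      rintro n ⟨M, -, rfl⟩
      have : M.edgeSet = ∅ := Set.subset_eq_empty M.edgeSet_subset hE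
      simp [this]
    omega
  · obtain ⟨u, v, huv, huniq⟩ := exists_leaf hac (Set.nonempty_iff_ne_empty.mpr hE)
    set D : Set (Sym2 V) := {e | u ∈ e ∨ v ∈ e} with hD
    set F' := F.deleteEdges D with hF'def
    have hle : F' ≤ F := F.deleteEdges_le D
    have hF'adj : ∀ a b, F'.Adj a b ↔ F.Adj a b ∧ a ≠ u ∧ a ≠ v ∧ b ≠ u ∧ b ≠ v := by
      intro a b
      rw [hF'def]
      simp only [SimpleGraph.deleteEdges_adj, hD, Set.mem_setOf_eq, Sym2.mem_iff, not_or]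
      constructor
      · rintro ⟨h, ⟨h1, h2⟩, ⟨h3, h4⟩⟩
        exact ⟨h, fun e => h1 e.symm, fun e => h3 e.symm, fun e => h2 e.symm, fun e => h4 e.symm⟩
      · rintro ⟨h, h1, h2, h3, h4⟩
        exact ⟨h, ⟨fun e => h1 e.symm, fun e => h3 e.symm⟩, ⟨fun e => h2 e.symm, fun e => h4 e.symm⟩⟩
    have hisou : ∀ b, ¬F'.Adj u b := fun b h => ((hF'adj u b).mp h).2.1 rfl
    have hisov : ∀ b, ¬F'.Adj v b := fun b h => ((hF'adj v b).mp h).2.2.1 rfl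
    have hF'ac : F'.IsAcyclic := fun a c hc => hac (c.mapLe hle) ((Walk.mapLe_isCycle hle).mpr hc)
    have hedgelt : F'.edgeSet.ncard < m := by
      have hsub : F'.edgeSet ⊂ F.edgeSet := by
        constructor
        · exact SimpleGraph.edgeSet_mono hle
        · intro habs
          have h1 : s(u,v) ∈ F.edgeSet := huv
          have h2 : s(u,v) ∈ F'.edgeSet := habs h1
          have : F'.Adj u v := h2
          exact hisou v this
      exact hm ▸ Set.ncard_lt_ncard hsub (Set.toFinite _)
    -- α claims
    have hα1 : indepNum F + 1 ≤ indepNum F' := by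
      obtain ⟨s, hs, hcard⟩ := exists_maxIndep F
      have hs' : F'.IsIndepSet' s := fun a ha b hb hab h => hs ha hb hab (hle h)
      have hz : ∃ z, z ∉ s ∧ (z = u ∨ z = v) := by
        by_cases hus : u ∈ s
        · exact ⟨v, fun hvs => hs hus hvs huv.ne huv, Or.inr rfl⟩
        · exact ⟨u, hus, Or.inl rfl⟩
      obtain ⟨z, hzs, hz⟩ := hz
      have hziso : ∀ b, ¬F'.Adj z b := by rcases hz with rfl | rfl; exacts [hisou, hisov]
      have hins : F'.IsIndepSet' (insert z s) := by
        intro a ha b hb hab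
        rcases ha with rfl | ha
        · exact hziso b
        · rcases hb with rfl | hb
          · exact fun h => hziso a h.symm
          · exact hs' ha hb hab
      have hle' := ncard_le_indepNum F' hins
      rwa [Set.ncard_insert_of_notMem hzs (Set.toFinite s), hcard] at hle'
    have hα2 : indepNum F' ≤ indepNum F + 1 := by
      obtain ⟨s, hs, hcard⟩ := exists_maxIndep F'
      set t : Set V := insert u (s \ {u, v}) with ht
      have htindep : F.IsIndepSet' t := by
        intro a ha b hb hab h
        rcases ha with rfl | ⟨has, hauv⟩
        · rcases hb with rfl | ⟨hbs, hbuv⟩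
          · exact hab rfl
          · exact hbuv (by simp [huniq b h])
        · rcases hb with rfl | ⟨hbs, hbuv⟩
          · exact hauv (by simp [huniq a h.symm])
          · simp only [Set.mem_insert_iff, Set.mem_singleton_iff, not_or] at hauv hbuv
            exact hs has hbs hab ((hF'adj a b).mpr ⟨h, hauv.1, hauv.2, hbuv.1, hbuv.2⟩)
      have hcard_t : s.ncard ≤ t.ncard + 1 := by
        have h1 := Set.ncard_le_ncard_diff_add_ncard s {u,v} (Set.toFinite _)
        have h2 : ({u,v} : Set V).ncard ≤ 2 := by
          have := Set.ncard_insert_le u ({v} : Set V)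
          simpa using this
        have h3 : t.ncard = (s \ {u,v}).ncard + 1 :=
          Set.ncard_insert_of_notMem (by simp) (Set.toFinite _)
        omega
      have hfin := ncard_le_indepNum F htindep
      omega
    -- μ claims
    have hμ1 : matchNum F' + 1 ≤ matchNum F := by
      obtain ⟨M', hM', hMcard⟩ := exists_maxMatching F'
      have hvertu : u ∉ M'.verts := by
        intro h
        obtain ⟨b, hb, -⟩ := hM' h
        exact hisou b (M'.adj_sub hb)
      have hvertv : v ∉ M'.verts := by
        intro h
        obtain ⟨b, hb, -⟩ := hM' h
        exact hisov b (M'.adj_sub hb)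
      set Mb := ofLE hle M' with hMb
      set Me := F.subgraphOfAdj huv with hMe
      have hdisj : Disjoint Mb.support Me.support := by
        rw [Set.disjoint_right]
        intro x hxe hxb
        have hx2 : x ∈ M'.verts := M'.support_subset_verts hxb
        have hx3 : x ∈ ({u, v} : Set V) := by
          simpa [hMe] using Me.support_subset_verts hxe
        rcases hx3 with rfl | rfl
        · exact hvertu hx2
        · exact hvertv hx2
      have hMmatch : (Mb ⊔ Me).IsMatching :=
        (ofLE_isMatching hle hM').sup (SimpleGraph.Subgraph.IsMatching.subgraphOfAdj huv) hdisj
      have hnotmem : s(u,v) ∉ M'.edgeSet := by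
        intro h
        exact hvertu (M'.edge_vert h)
      have hMbE : Mb.edgeSet = M'.edgeSet := rfl
      have hMeE : Me.edgeSet = {s(u,v)} := by
        rw [hMe]; exact SimpleGraph.edgeSet_subgraphOfAdj huv
      have hedge : (Mb ⊔ Me).edgeSet.ncard = M'.edgeSet.ncard + 1 := by
        rw [SimpleGraph.Subgraph.edgeSet_sup, hMbE, hMeE,
          Set.ncard_union_eq (Set.disjoint_singleton_right.mpr hnotmem)
            (Set.toFinite _) (Set.toFinite _), Set.ncard_singleton]
      have hfin := le_matchNum F hMmatch
      omega
    have hμ2 : matchNum F ≤ matchNum F' + 1 := by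
      obtain ⟨M, hM, hMcard⟩ := exists_maxMatching F
      set P : V → V → Prop := fun a b => M.Adj a b ∧ a ≠ u ∧ a ≠ v ∧ b ≠ u ∧ b ≠ v with hP
      have hPsymm : Symmetric P := by
        rintro a b ⟨h, h1, h2, h3, h4⟩
        exact ⟨h.symm, h3, h4, h1, h2⟩
      set N : F'.Subgraph :=
        { verts := {a | ∃ b, P a b}
          Adj := P
          adj_sub := fun {a b} h => (hF'adj a b).mpr ⟨M.adj_sub h.1, h.2.1, h.2.2.1, h.2.2.2.1, h.2.2.2.2⟩
          edge_vert := fun {a b} h => ⟨b, h⟩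
          symm := ⟨fun a b h => hPsymm h⟩ } with hN
      have hNmatch : N.IsMatching := by
        rintro a ⟨b, hb⟩
        obtain ⟨w, hw, hwuniq⟩ := hM (M.edge_vert hb.1)
        refine ⟨b, hb, fun y hy => ?_⟩
        rw [hwuniq y hy.1, hwuniq b hb.1]
      have hbound : M.edgeSet.ncard ≤ N.edgeSet.ncard + 1 := by
        by_cases hvm : v ∈ M.verts
        · obtain ⟨w₀, hw₀, hwuniq⟩ := hM hvm
          have hsub : M.edgeSet ⊆ N.edgeSet ∪ {s(v, w₀)} := by
            intro e he
            induction e using Sym2.ind with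
            | _ x y =>
              rw [SimpleGraph.Subgraph.mem_edgeSet] at he
              by_cases hbad : x = u ∨ x = v ∨ y = u ∨ y = v
              · right
                rw [Set.mem_singleton_iff]
                rcases hbad with rfl | rfl | rfl | rfl
                · have hyv : y = v := huniq y (M.adj_sub he)
                  subst hyv
                  have hx := hwuniq _ he.symm
                  rw [hx]
                  exact Sym2.eq_swap
                · have hy := hwuniq _ he
                  rw [hy]
                · have hxv : x = v := huniq _ (M.adj_sub he).symm
                  subst hxv
                  have hy := hwuniq _ he
                  rw [hy]
                · have hx := hwuniq _ he.symm
                  rw [hx]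
                  exact Sym2.eq_swap
              · left
                push_neg at hbad
                exact (SimpleGraph.Subgraph.mem_edgeSet).mpr
                  ⟨he, hbad.1, hbad.2.1, hbad.2.2.1, hbad.2.2.2⟩
          calc M.edgeSet.ncard ≤ (N.edgeSet ∪ {s(v, w₀)}).ncard :=
                Set.ncard_le_ncard hsub (Set.toFinite _)
            _ ≤ N.edgeSet.ncard + ({s(v,w₀)} : Set (Sym2 V)).ncard := Set.ncard_union_le _ _
            _ = N.edgeSet.ncard + 1 := by rw [Set.ncard_singleton]
        · have hsub : M.edgeSet ⊆ N.edgeSet := by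
            intro e he
            induction e using Sym2.ind with
            | _ x y =>
              rw [SimpleGraph.Subgraph.mem_edgeSet] at he
              have hxv : x ≠ v := fun h => hvm (h ▸ M.edge_vert he)
              have hyv : y ≠ v := fun h => hvm (h ▸ M.edge_vert he.symm)
              have hxu : x ≠ u := by
                rintro rfl
                exact hyv (huniq y (M.adj_sub he))
              have hyu : y ≠ u := by
                rintro rfl
                exact hxv (huniq x (M.adj_sub he).symm)
              exact (SimpleGraph.Subgraph.mem_edgeSet).mpr ⟨he, hxu, hxv, hyu, hyv⟩
          have := Set.ncard_le_ncard hsub (Set.toFinite _)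
          omega
      have hfin := le_matchNum F' hNmatch
      omega
    have hIH := ih _ hedgelt F' hF'ac rfl
    omega




lemma key {G : SimpleGraph V} (hconn : G.Connected) (huni : G.edgeSet.ncard = Fintype.card V)
    {v : V} (c : G.Walk v v) (hc : c.IsCycle)
    (hsum : indepNum G + matchNum G = Fintype.card V - 1)
    {w x : V} (he : s(w, x) ∈ c.edges) :
    ∃ S : Set V, w ∈ S ∧ x ∈ S ∧ IsMaxIndepSet G (S \ {w}) ∧ IsMaxIndepSet G (S \ {x}) := by
  classical
  haveI : Nonempty V := hconn.nonempty
  have hn1 : 1 ≤ Fintype.card V := Fintype.card_pos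
  have hAdj : G.Adj w x := Walk.adj_of_mem_edges c he
  set T := G.deleteEdges {s(w,x)} with hT
  have hTconn : T.Connected := connected_deleteEdges_of_cycle hconn hc he
  have heG : s(w,x) ∈ G.edgeSet := hAdj
  have hTcard : T.edgeSet.ncard = Fintype.card V - 1 := by
    rw [hT, SimpleGraph.edgeSet_deleteEdges,
      Set.ncard_diff_singleton_of_mem heG, huni]
  have hTac : T.IsAcyclic := acyclic_of_connected_card hTconn (by omega)
  have hforest : indepNum T + matchNum T = Fintype.card V := forest_aux _ T hTac rfl
  have hμ : matchNum T ≤ matchNum G := matchNum_mono (G.deleteEdges_le _)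
  have hαT : indepNum G + 1 ≤ indepNum T := by omega
  obtain ⟨S₀, hS₀, hS₀card⟩ := exists_maxIndep T
  obtain ⟨S, hSsub, hScard⟩ :=
    Set.exists_subset_card_eq (le_of_le_of_eq hαT hS₀card.symm)
  have hSind : T.IsIndepSet' S := hS₀.mono hSsub
  have hwx : w ∈ S ∧ x ∈ S := by
    by_contra hcon
    have hGind : G.IsIndepSet' S := by
      intro a ha b hb hab hadj
      have hTadj : T.Adj a b := by
        rw [hT, SimpleGraph.deleteEdges_adj]
        refine ⟨hadj, ?_⟩
        intro hmem
        rw [Set.mem_singleton_iff, Sym2.eq_iff] at hmem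
        rcases hmem with ⟨rfl, rfl⟩ | ⟨rfl, rfl⟩
        · exact hcon ⟨ha, hb⟩
        · exact hcon ⟨hb, ha⟩
      exact hSind ha hb hab hTadj
    have := ncard_le_indepNum G hGind
    omega
  obtain ⟨hwS, hxS⟩ := hwx
  have hdiffind : ∀ z, z = w ∨ z = x → G.IsIndepSet' (S \ {z}) := by
    intro z hz a ha b hb hab hadj
    have hTadj : T.Adj a b := by
      rw [hT, SimpleGraph.deleteEdges_adj]
      refine ⟨hadj, ?_⟩
      intro hmem
      rw [Set.mem_singleton_iff, Sym2.eq_iff] at hmem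
      rcases hz with rfl | rfl
      · rcases hmem with ⟨rfl, rfl⟩ | ⟨rfl, rfl⟩
        · exact ha.2 rfl
        · exact hb.2 rfl
      · rcases hmem with ⟨rfl, rfl⟩ | ⟨rfl, rfl⟩
        · exact hb.2 rfl
        · exact ha.2 rfl
    exact hSind ha.1 hb.1 hab hTadj
  have hSfin : S.Finite := Set.toFinite _
  refine ⟨S, hwS, hxS, ⟨hdiffind w (Or.inl rfl), ?_⟩, ⟨hdiffind x (Or.inr rfl), ?_⟩⟩
  · rw [Set.ncard_diff_singleton_of_mem hwS, hScard]; omega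
  · rw [Set.ncard_diff_singleton_of_mem hxS, hScard]; omega


end UniHelp

open UniHelp in
theorem stmt14 {V : Type*} [Fintype V] (G : SimpleGraph V)
    (hconn : G.Connected) (huni : G.edgeSet.ncard = Fintype.card V)
    {v : V} (c : G.Walk v v) (hc : c.IsCycle)
    (hsum : indepNum G + matchNum G = Fintype.card V - 1) :
    ∀ w ∈ c.support, w ∉ closedNbhdSet G (core G) := by
  classical
  intro w hw hmem
  have hgen : ∀ {a b : V} (p : G.Walk a b), w ∈ p.support →
      w = b ∨ ∃ x, s(w,x) ∈ p.edges := by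
    intro a b p
    induction p with
    | nil => intro h; left; simpa using h
    | @cons a y b hadj q ih =>
      intro hwmem
      rw [SimpleGraph.Walk.support_cons] at hwmem
      rcases List.mem_cons.mp hwmem with rfl | hwmem'
      · right
        exact ⟨y, by rw [SimpleGraph.Walk.edges_cons]; exact List.mem_cons_self⟩
      · rcases ih hwmem' with rfl | ⟨x, hx⟩
        · exact Or.inl rfl
        · exact Or.inr ⟨x, by rw [SimpleGraph.Walk.edges_cons]; exact List.mem_cons_of_mem _ hx⟩
  have hedge : ∃ x, s(w,x) ∈ c.edges := by
    rcases hgen c hw with rfl | hex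
    · cases c with
      | nil => exact absurd rfl hc.ne_nil
      | @cons a y b hadj q =>
        exact ⟨y, by rw [SimpleGraph.Walk.edges_cons]; exact List.mem_cons_self⟩
    · exact hex
  obtain ⟨x, hx⟩ := hedge
  obtain ⟨S, hwS, hxS, hmaxw, hmaxx⟩ := key hconn huni c hc hsum hx
  rcases hmem with hcore | ⟨u, hucore, hadj⟩
  · have : w ∈ S \ {w} := Set.mem_sInter.mp hcore _ hmaxw
    exact this.2 rfl
  · have huS : u ∈ S \ {x} := Set.mem_sInter.mp hucore _ hmaxx
    have hwx' : w ≠ x := (SimpleGraph.Walk.adj_of_mem_edges c hx).ne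
    have hwS' : w ∈ S \ {x} := ⟨hwS, hwx'⟩
    exact hmaxx.1 hwS' huS hadj.ne hadj
end

section
/- Let G be a connected unicyclic graph on n vertices with α(G) + μ(G) = n − 1, with unique cycle C. Then for every vertex x ∈ N₁(C) (vertices outside C with a neighbor on C), every maximum independent set of the tree T_x extends to a maximum independent set of G; that is, for each A ∈ Ω(T_x) there exists S ∈ Ω(G) with A ⊆ S. -/
open SimpleGraph hiding indepNum

section Helpers

variable {V : Type*}

private lemma indep_bddAbove [Finite V] (G : SimpleGraph V) :
    BddAbove {n | ∃ s : Set V, G.IsIndepSet' s ∧ s.ncard = n} := by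
  refine ⟨Nat.card V, ?_⟩
  rintro n ⟨s, -, rfl⟩
  calc s.ncard ≤ (Set.univ : Set V).ncard :=
        Set.ncard_le_ncard (Set.subset_univ s) Set.finite_univ
    _ = Nat.card V := Set.ncard_univ V

private lemma le_indepNum [Finite V] (G : SimpleGraph V) {s : Set V} (hs : G.IsIndepSet' s) :
    s.ncard ≤ indepNum G := le_csSup (indep_bddAbove G) ⟨s, hs, rfl⟩

private lemma indepNum_le [Finite V] (G : SimpleGraph V) {k : ℕ}
    (h : ∀ s : Set V, G.IsIndepSet' s → s.ncard ≤ k) : indepNum G ≤ k := by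
  have hne : {n | ∃ s : Set V, G.IsIndepSet' s ∧ s.ncard = n}.Nonempty :=
    ⟨0, ∅, Set.pairwise_empty _, by simp⟩
  refine csSup_le hne ?_
  rintro n ⟨s, hs, rfl⟩
  exact h s hs

private lemma match_bddAbove [Finite V] (G : SimpleGraph V) :
    BddAbove {n | ∃ M : SimpleGraph.Subgraph G, M.IsMatching ∧ M.edgeSet.ncard = n} := by
  refine ⟨Nat.card (Sym2 V), ?_⟩
  rintro n ⟨M, -, rfl⟩
  calc M.edgeSet.ncard ≤ (Set.univ : Set (Sym2 V)).ncard :=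
        Set.ncard_le_ncard (Set.subset_univ _) Set.finite_univ
    _ = Nat.card (Sym2 V) := Set.ncard_univ _

private lemma le_matchNum [Finite V] (G : SimpleGraph V) {M : G.Subgraph} (hM : M.IsMatching) :
    M.edgeSet.ncard ≤ matchNum G := le_csSup (match_bddAbove G) ⟨M, hM, rfl⟩

private lemma exists_max_indep_s16 [Finite V] (G : SimpleGraph V) (U : Set V) :
    ∃ B : Set V, B ⊆ U ∧ G.IsIndepSet' B ∧
      ∀ s : Set V, s ⊆ U → G.IsIndepSet' s → s.ncard ≤ B.ncard := by
  set T := {n | ∃ s : Set V, (s ⊆ U ∧ G.IsIndepSet' s) ∧ s.ncard = n} with hT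
  have hne : T.Nonempty := ⟨0, ∅, ⟨Set.empty_subset U, Set.pairwise_empty _⟩, by simp⟩
  have hbdd : BddAbove T := by
    refine ⟨Nat.card V, ?_⟩
    rintro n ⟨s, -, rfl⟩
    calc s.ncard ≤ (Set.univ : Set V).ncard :=
          Set.ncard_le_ncard (Set.subset_univ s) Set.finite_univ
      _ = Nat.card V := Set.ncard_univ V
  obtain ⟨B, ⟨hBU, hBind⟩, hBcard⟩ := Nat.sSup_mem hne hbdd
  exact ⟨B, hBU, hBind, fun s hsU hs => hBcard ▸ le_csSup hbdd ⟨s, ⟨hsU, hs⟩, rfl⟩⟩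

private lemma connected_deleteEdges {G : SimpleGraph V} {a b : V}
    (hconn : G.Connected)
    (hr : (G.deleteEdges {s(a,b)}).Reachable a b) :
    (G.deleteEdges {s(a,b)}).Connected := by
  have hpre : (G.deleteEdges {s(a,b)}).Preconnected := by
    intro u v
    obtain ⟨w⟩ := hconn.preconnected u v
    induction w with
    | nil => exact Reachable.refl _
    | @cons u' v' w' h p ih =>
      refine Reachable.trans ?_ ih
      by_cases he : s(u', v') = s(a, b)
      · rcases Sym2.eq_iff.mp he with ⟨rfl, rfl⟩ | ⟨rfl, rfl⟩
        · exact hr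
        · exact hr.symm
      · exact (SimpleGraph.deleteEdges_adj.mpr ⟨h, by simpa using he⟩).reachable
  haveI := hconn.nonempty
  exact SimpleGraph.Connected.mk hpre

private lemma card_le_edges [Fintype V] :
    ∀ (m : ℕ) (H : SimpleGraph V), H.Connected → H.edgeSet.ncard = m →
      Fintype.card V - 1 ≤ m := by
  intro m
  induction m using Nat.strong_induction_on with
  | _ m ih =>
    intro H hconn hm
    by_cases hac : H.IsAcyclic
    · have ht : H.IsTree := ⟨hconn, hac⟩
      classical
      haveI : Fintype H.edgeSet := (Set.toFinite _).fintype
      have hcf := ht.card_edgeFinset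
      have : H.edgeSet.ncard = H.edgeFinset.card := by
        rw [Set.ncard_eq_toFinset_card']
        congr 1
      omega
    · simp only [SimpleGraph.IsAcyclic] at hac
      push_neg at hac
      obtain ⟨v, c, hc⟩ := hac
      have hnn : ¬ c.Nil := by
        rw [SimpleGraph.Walk.nil_iff_length_eq]
        have := hc.three_le_length
        omega
      obtain ⟨u, h, q, rfl⟩ := SimpleGraph.Walk.not_nil_iff.mp hnn
      have hcd := hc.edges_nodup
      rw [SimpleGraph.Walk.edges_cons] at hcd
      have hue : s(v, u) ∉ q.edges := (List.nodup_cons.mp hcd).1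
      set H' := H.deleteEdges {s(v,u)} with hH'
      have hsub : ∀ e ∈ q.edges, e ∈ H'.edgeSet := by
        intro e he
        rw [hH', SimpleGraph.edgeSet_deleteEdges]
        refine ⟨q.edges_subset_edgeSet he, ?_⟩
        rw [Set.mem_singleton_iff]
        rintro rfl
        exact hue he
      have hr : H'.Reachable v u := ((q.transfer H' hsub).reverse).reachable
      have hconn' := connected_deleteEdges hconn hr
      have hmem : s(v,u) ∈ H.edgeSet := h
      have hmge : 1 ≤ m := by
        rw [← hm]
        have : (H.edgeSet).Nonempty := ⟨_, hmem⟩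
        have := (Set.ncard_pos (Set.toFinite _)).mpr this
        omega
      have hcard : H'.edgeSet.ncard = m - 1 := by
        rw [hH', SimpleGraph.edgeSet_deleteEdges]
        have := Set.ncard_diff_singleton_add_one hmem (Set.toFinite H.edgeSet)
        omega
      have := ih (m-1) (by omega) H' hconn' hcard
      omega

private lemma acyclic_of_connected_card [Fintype V] {H : SimpleGraph V}
    (hconn : H.Connected) (hcard : H.edgeSet.ncard + 1 = Fintype.card V) :
    H.IsAcyclic := by
  intro v c hc
  have hnn : ¬ c.Nil := by
    rw [SimpleGraph.Walk.nil_iff_length_eq]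
    have := hc.three_le_length
    omega
  obtain ⟨u, h, q, rfl⟩ := SimpleGraph.Walk.not_nil_iff.mp hnn
  have hcd := hc.edges_nodup
  rw [SimpleGraph.Walk.edges_cons] at hcd
  have hue : s(v, u) ∉ q.edges := (List.nodup_cons.mp hcd).1
  set H' := H.deleteEdges {s(v,u)} with hH'
  have hsub : ∀ e ∈ q.edges, e ∈ H'.edgeSet := by
    intro e he
    rw [hH', SimpleGraph.edgeSet_deleteEdges]
    refine ⟨q.edges_subset_edgeSet he, ?_⟩
    rw [Set.mem_singleton_iff]
    rintro rfl
    exact hue he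
  have hr : H'.Reachable v u := ((q.transfer H' hsub).reverse).reachable
  have hconn' := connected_deleteEdges hconn hr
  have hmem : s(v,u) ∈ H.edgeSet := h
  have hmge : 1 ≤ H.edgeSet.ncard := by
    have : (H.edgeSet).Nonempty := ⟨_, hmem⟩
    have := (Set.ncard_pos (Set.toFinite _)).mpr this
    omega
  have hcard' : H'.edgeSet.ncard = H.edgeSet.ncard - 1 := by
    rw [hH', SimpleGraph.edgeSet_deleteEdges]
    have := Set.ncard_diff_singleton_add_one hmem (Set.toFinite H.edgeSet)
    omega
  have := card_le_edges _ H' hconn' hcard'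
  omega

private lemma cycles_through [Fintype V] {G : SimpleGraph V} (hconn : G.Connected)
    (huni : G.edgeSet.ncard = Fintype.card V) {v : V} {c : G.Walk v v} (hc : c.IsCycle)
    {z : V} (hz : z ∈ c.support) {w : V} (c' : G.Walk w w) (hc' : c'.IsCycle) :
    z ∈ c'.support := by
  classical
  by_contra hz'
  set c2 := c.rotate z hz with hc2def
  have hc2 : c2.IsCycle := hc.rotate hz
  have hnn : ¬ c2.Nil := by
    rw [SimpleGraph.Walk.nil_iff_length_eq]
    have := hc2.three_le_length
    omega
  obtain ⟨u, h, q, hq⟩ := SimpleGraph.Walk.not_nil_iff.mp hnn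
  have hcd := hc2.edges_nodup
  rw [hq, SimpleGraph.Walk.edges_cons] at hcd
  have hue : s(z, u) ∉ q.edges := (List.nodup_cons.mp hcd).1
  set G' := G.deleteEdges {s(z,u)} with hG'
  have hsub : ∀ e ∈ q.edges, e ∈ G'.edgeSet := by
    intro e he
    rw [hG', SimpleGraph.edgeSet_deleteEdges]
    refine ⟨q.edges_subset_edgeSet he, ?_⟩
    rw [Set.mem_singleton_iff]
    rintro rfl
    exact hue he
  have hr : G'.Reachable z u := ((q.transfer G' hsub).reverse).reachable
  have hconn' := connected_deleteEdges hconn hr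
  have hmem : s(z,u) ∈ G.edgeSet := h
  have hcard' : G'.edgeSet.ncard + 1 = Fintype.card V := by
    rw [hG', SimpleGraph.edgeSet_deleteEdges]
    have := Set.ncard_diff_singleton_add_one hmem (Set.toFinite G.edgeSet)
    omega
  have hac := acyclic_of_connected_card hconn' hcard'
  have hsub' : ∀ e ∈ c'.edges, e ∈ G'.edgeSet := by
    intro e he
    rw [hG', SimpleGraph.edgeSet_deleteEdges]
    refine ⟨c'.edges_subset_edgeSet he, ?_⟩
    rw [Set.mem_singleton_iff]
    rintro rfl
    exact hz' (c'.fst_mem_support_of_mem_edges he)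
  exact hac _ (hc'.transfer hsub')

private lemma keForest [Fintype V] (G : SimpleGraph V) :
    ∀ (U : Set V), (∀ (w : V) (p : G.Walk w w), p.IsCycle → ¬(∀ z ∈ p.support, z ∈ U)) →
    ∃ (s : Set V) (M : G.Subgraph), s ⊆ U ∧ G.IsIndepSet' s ∧ M.IsMatching ∧
      M.support ⊆ U ∧ U.ncard ≤ s.ncard + M.edgeSet.ncard := by
  classical
  suffices H : ∀ (n : ℕ) (U : Set V), U.ncard = n →
      (∀ (w : V) (p : G.Walk w w), p.IsCycle → ¬(∀ z ∈ p.support, z ∈ U)) →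
      ∃ (s : Set V) (M : G.Subgraph), s ⊆ U ∧ G.IsIndepSet' s ∧ M.IsMatching ∧
        M.support ⊆ U ∧ U.ncard ≤ s.ncard + M.edgeSet.ncard by
    exact fun U hU => H U.ncard U rfl hU
  intro n
  induction n using Nat.strong_induction_on with
  | _ n ih =>
  intro U hn hU
  by_cases hedge : ∃ a ∈ U, ∃ b ∈ U, G.Adj a b
  case neg =>
    push_neg at hedge
    refine ⟨U, ⊥, subset_rfl, ?_, ?_, ?_, ?_⟩
    · intro a ha b hb _
      exact hedge a ha b hb
    · intro v hv
      rw [SimpleGraph.Subgraph.verts_bot] at hv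
      exact absurd hv (Set.notMem_empty v)
    · intro v hv
      rw [SimpleGraph.Subgraph.mem_support] at hv
      obtain ⟨w, hw⟩ := hv
      exact absurd hw (SimpleGraph.Subgraph.not_bot_adj)
    · rw [SimpleGraph.Subgraph.edgeSet_bot]
      simp
  case pos =>
    obtain ⟨a, haU, b, hbU, hab⟩ := hedge
    set P := {k | ∃ (u' v' : V) (p : G.Walk u' v'),
      (p.IsPath ∧ ∀ z ∈ p.support, z ∈ U) ∧ p.length = k} with hP
    have hP1 : 1 ∈ P := by
      refine ⟨a, b, SimpleGraph.Walk.cons hab SimpleGraph.Walk.nil, ⟨?_, ?_⟩, by simp⟩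
      · simp [hab.ne]
      · intro z hz
        simp only [SimpleGraph.Walk.support_cons, SimpleGraph.Walk.support_nil,
          List.mem_cons, List.mem_singleton] at hz
        rcases hz with rfl | rfl | h
        · exact haU
        · exact hbU
        · exact absurd h List.not_mem_nil
    have hPbdd : BddAbove P := by
      refine ⟨Fintype.card V, ?_⟩
      rintro k ⟨u', v', p, ⟨hp, -⟩, rfl⟩
      exact hp.length_lt.le
    have hPmem := Nat.sSup_mem ⟨1, hP1⟩ hPbdd
    obtain ⟨u, v, p, ⟨hp, hpU⟩, hplen⟩ := hPmem
    have hlen1 : 1 ≤ p.length := by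
      have := le_csSup hPbdd hP1
      omega
    have hnn : ¬ p.Nil := by
      rw [SimpleGraph.Walk.nil_iff_length_eq]
      omega
    obtain ⟨w0, h0, q, rfl⟩ := SimpleGraph.Walk.not_nil_iff.mp hnn
    -- every U-neighbor of u lies on the path
    have hnbr : ∀ z ∈ U, G.Adj u z → z ∈ (SimpleGraph.Walk.cons h0 q).support := by
      intro z hzU hadj
      by_contra hmem
      have hpath' : (SimpleGraph.Walk.cons hadj.symm (SimpleGraph.Walk.cons h0 q)).IsPath :=
        (SimpleGraph.Walk.cons_isPath_iff _ _).mpr ⟨hp, hmem⟩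
      have hmem' : (SimpleGraph.Walk.cons hadj.symm (SimpleGraph.Walk.cons h0 q)).length ∈ P := by
        refine ⟨z, v, _, ⟨hpath', ?_⟩, rfl⟩
        intro t ht
        rw [SimpleGraph.Walk.support_cons, List.mem_cons] at ht
        rcases ht with rfl | ht
        · exact hzU
        · exact hpU t ht
      have := le_csSup hPbdd hmem'
      rw [SimpleGraph.Walk.length_cons] at this
      omega
    -- u has a unique U-neighbor, namely w0
    have huniq : ∀ z ∈ U, G.Adj u z → z = w0 := by
      intro z hzU hadj
      by_contra hzw
      have hzsupp := hnbr z hzU hadj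
      have hzu : z ≠ u := fun h => G.irrefl (h ▸ hadj)
      have hp1 : ((SimpleGraph.Walk.cons h0 q).takeUntil z hzsupp).IsPath := hp.takeUntil _
      have hcyc : (SimpleGraph.Walk.cons hadj.symm
          ((SimpleGraph.Walk.cons h0 q).takeUntil z hzsupp)).IsCycle := by
        rw [SimpleGraph.Walk.cons_isCycle_iff]
        refine ⟨hp1, fun hmem => ?_⟩
        have hmem2 := SimpleGraph.Walk.edges_takeUntil_subset _ hzsupp hmem
        rw [SimpleGraph.Walk.edges_cons, List.mem_cons] at hmem2
        rcases hmem2 with h1 | h2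
        · rw [Sym2.eq_iff] at h1
          rcases h1 with ⟨h1', h2'⟩ | ⟨h1', h2'⟩
          · exact hzu h1'
          · exact hzw h1'
        · have := SimpleGraph.Walk.snd_mem_support_of_mem_edges q h2
          rw [SimpleGraph.Walk.cons_isPath_iff] at hp
          exact hp.2 this
      refine hU z _ hcyc ?_
      intro t ht
      rw [SimpleGraph.Walk.support_cons, List.mem_cons] at ht
      rcases ht with rfl | ht
      · exact hzU
      · exact hpU t (SimpleGraph.Walk.support_takeUntil_subset _ hzsupp ht)
    have huU : u ∈ U := hpU u (SimpleGraph.Walk.start_mem_support _)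
    have hw0U : w0 ∈ U := by
      refine hpU w0 ?_
      rw [SimpleGraph.Walk.support_cons]
      exact List.mem_cons_of_mem _ (SimpleGraph.Walk.start_mem_support q)
    have hne0 : u ≠ w0 := h0.ne
    set U' := U \ {u, w0} with hU'def
    have hsubU' : U' ⊆ U := Set.diff_subset
    have hsub2 : ({u, w0} : Set V) ⊆ U := by
      intro t ht
      rcases ht with rfl | ht
      · exact huU
      · rw [Set.mem_singleton_iff] at ht
        exact ht ▸ hw0U
    have hcard2 : ({u, w0} : Set V).ncard = 2 := Set.ncard_pair hne0
    have hn2 : 2 ≤ n := by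
      rw [← hn]
      calc 2 = ({u, w0} : Set V).ncard := hcard2.symm
        _ ≤ U.ncard := Set.ncard_le_ncard hsub2 (Set.toFinite _)
    have hcardU' : U'.ncard = n - 2 := by
      rw [hU'def, Set.ncard_diff hsub2 (Set.toFinite _), hcard2, hn]
    obtain ⟨s', M', hs'U, hs'ind, hM', hM'supp, hineq⟩ :=
      ih (n-2) (by omega) U' hcardU'
        (fun w p hcyc hsupp => hU w p hcyc fun z hz => (hsupp z hz).1)
    have hus' : u ∉ s' := fun h => (hs'U h).2 (Or.inl rfl)
    refine ⟨insert u s', M' ⊔ G.subgraphOfAdj h0, ?_, ?_, ?_, ?_, ?_⟩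
    · intro t ht
      rcases ht with rfl | ht
      · exact huU
      · exact hsubU' (hs'U ht)
    · haveI : Std.Symm (fun a b => ¬ G.Adj a b) := ⟨fun a' b' (hab' : ¬ G.Adj a' b') h => hab' h.symm⟩
      rw [SimpleGraph.IsIndepSet', Set.pairwise_insert_of_symm]
      refine ⟨hs'ind, fun t ht _ hadj => ?_⟩
      have := huniq t (hsubU' (hs'U ht)) hadj
      exact (hs'U ht).2 (Or.inr (by rw [Set.mem_singleton_iff]; exact this))
    · refine hM'.sup (SimpleGraph.Subgraph.IsMatching.subgraphOfAdj h0) ?_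
      rw [SimpleGraph.support_subgraphOfAdj, Set.disjoint_right]
      intro t ht hmem
      have htU' := hM'supp hmem
      rcases ht with rfl | ht
      · exact htU'.2 (Or.inl rfl)
      · rw [Set.mem_singleton_iff] at ht
        exact htU'.2 (Or.inr (by rw [Set.mem_singleton_iff]; exact ht))
    · intro t ht
      rw [SimpleGraph.Subgraph.mem_support] at ht
      obtain ⟨w', hw'⟩ := ht
      rw [SimpleGraph.Subgraph.sup_adj] at hw'
      rcases hw' with hw' | hw'
      · exact hsubU' (hM'supp (M'.mem_support.mpr ⟨w', hw'⟩))
      · have : t ∈ (G.subgraphOfAdj h0).support :=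
          (G.subgraphOfAdj h0).mem_support.mpr ⟨w', hw'⟩
        rw [SimpleGraph.support_subgraphOfAdj] at this
        exact hsub2 this
    · have hns : (insert u s').ncard = s'.ncard + 1 :=
        Set.ncard_insert_of_notMem hus' (Set.toFinite _)
      have hnotedge : s(u, w0) ∉ M'.edgeSet := by
        intro hmem
        have hadj' : M'.Adj u w0 := (SimpleGraph.Subgraph.mem_edgeSet).mp hmem
        exact (hM'supp (M'.mem_support.mpr ⟨w0, hadj'⟩)).2 (Or.inl rfl)
      have hecard : (M' ⊔ G.subgraphOfAdj h0).edgeSet.ncard = M'.edgeSet.ncard + 1 := by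
        rw [SimpleGraph.Subgraph.edgeSet_sup, SimpleGraph.edgeSet_subgraphOfAdj,
          Set.ncard_union_eq (by rwa [Set.disjoint_singleton_right]) (Set.toFinite _)
            (Set.toFinite _), Set.ncard_singleton]
      rw [hns, hecard, hn]
      omega

end Helpers

theorem stmt16 {V : Type*} [Fintype V] (G : SimpleGraph V)
    (hconn : G.Connected) (huni : G.edgeSet.ncard = Fintype.card V)
    {v : V} (c : G.Walk v v) (hc : c.IsCycle)
    (hsum : indepNum G + matchNum G = Fintype.card V - 1)
    (x y : V) (hx : x ∉ c.support) (hy : y ∈ c.support) (hadj : G.Adj x y) :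
    ∀ A : Set ((G.deleteEdges {s(x,y)}).connectedComponentMk x).supp,
      IsMaxIndepSet (treeComp G x y) A →
        ∃ S : Set V, IsMaxIndepSet G S ∧ Subtype.val '' A ⊆ S := by
  classical
  set D := G.deleteEdges {s(x,y)} with hD
  set W : Set V := (D.connectedComponentMk x).supp with hW
  intro A hA
  have hxW : x ∈ W := (ConnectedComponent.mem_supp_iff _ _).mpr rfl
  -- y is not in the component of x
  have hyW : y ∉ W := by
    intro hyW
    have hr : D.Reachable x y :=
      (ConnectedComponent.eq.mp ((ConnectedComponent.mem_supp_iff _ _).mp hyW)).symm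
    have hconnD : D.Connected := connected_deleteEdges hconn hr
    have hmem : s(x,y) ∈ G.edgeSet := hadj
    have hcard : D.edgeSet.ncard + 1 = Fintype.card V := by
      rw [hD, SimpleGraph.edgeSet_deleteEdges]
      have := Set.ncard_diff_singleton_add_one hmem (Set.toFinite G.edgeSet)
      omega
    have hac := acyclic_of_connected_card hconnD hcard
    have hsub : ∀ e ∈ c.edges, e ∈ D.edgeSet := by
      intro e he
      rw [hD, SimpleGraph.edgeSet_deleteEdges]
      refine ⟨c.edges_subset_edgeSet he, ?_⟩
      rw [Set.mem_singleton_iff]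
      rintro rfl
      exact hx (c.fst_mem_support_of_mem_edges he)
    exact hac _ (hc.transfer hsub)
  -- the only edge between W and its complement is xy
  have hS1 : ∀ a ∈ W, ∀ b, b ∉ W → G.Adj a b → a = x ∧ b = y := by
    intro a haW b hbW hab
    by_cases hDadj : D.Adj a b
    · exfalso
      apply hbW
      rw [hW, ConnectedComponent.mem_supp_iff]
      have h1 : D.connectedComponentMk b = D.connectedComponentMk a :=
        ConnectedComponent.eq.mpr hDadj.symm.reachable
      rw [h1]
      exact (ConnectedComponent.mem_supp_iff _ _).mp haW
    · rw [hD, SimpleGraph.deleteEdges_adj] at hDadj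
      push_neg at hDadj
      have hmem := hDadj hab
      rw [Set.mem_singleton_iff, Sym2.eq_iff] at hmem
      rcases hmem with ⟨ha', hb'⟩ | ⟨ha', hb'⟩
      · exact ⟨ha', hb'⟩
      · exact absurd haW (ha' ▸ hyW)
  -- adjacency in treeComp equals adjacency in G
  have hadjT : ∀ a b : W, (treeComp G x y).Adj a b ↔ G.Adj a b := by
    intro a b
    have h1 : (treeComp G x y).Adj a b ↔ D.Adj a b := by
      simp [treeComp, hD]
    rw [h1, hD, SimpleGraph.deleteEdges_adj]
    constructor
    · exact fun h => h.1
    · intro h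
      refine ⟨h, ?_⟩
      rw [Set.mem_singleton_iff, Sym2.eq_iff]
      rintro (⟨ha', hb'⟩ | ⟨ha', hb'⟩)
      · exact hyW (hb' ▸ b.2)
      · exact hyW (ha' ▸ a.2)
  set A0 : Set V := Subtype.val '' A with hA0def
  have hA0W : A0 ⊆ W := by rintro _ ⟨a, _, rfl⟩; exact a.2
  have hA0ind : G.IsIndepSet' A0 := by
    rintro _ ⟨a, ha, rfl⟩ _ ⟨b, hb, rfl⟩ hne
    have hne' : a ≠ b := fun h => hne (congrArg _ h)
    intro hadj'
    exact hA.1 ha hb hne' ((hadjT a b).mpr hadj')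
  have hA0card : A0.ncard = A.ncard := Set.ncard_image_of_injective A Subtype.val_injective
  -- A0 is a maximum independent subset of W
  have hA0max : ∀ s : Set V, s ⊆ W → G.IsIndepSet' s → s.ncard ≤ A0.ncard := by
    intro s hsW hsind
    set s' : Set W := Subtype.val ⁻¹' s with hs'def
    have himg : Subtype.val '' s' = s := by
      rw [hs'def, Set.image_preimage_eq_inter_range, Subtype.range_val]
      exact Set.inter_eq_self_of_subset_left hsW
    have hs'card : s'.ncard = s.ncard := by
      rw [← himg, Set.ncard_image_of_injective _ Subtype.val_injective]
    have hs'ind : (treeComp G x y).IsIndepSet' s' := by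
      intro a ha b hb hne hadj'
      have hne' : (a : V) ≠ (b : V) := fun h => hne (Subtype.ext h)
      exact hsind ha hb hne' ((hadjT a b).mp hadj')
    have h1 : s'.ncard ≤ indepNum (treeComp G x y) := le_indepNum _ hs'ind
    rw [← hA.2] at h1
    omega
  -- unions of independent sets on the two sides
  have hunion : ∀ s t : Set V, s ⊆ W → t ⊆ Wᶜ → G.IsIndepSet' s → G.IsIndepSet' t →
      (x ∉ s ∨ y ∉ t) → G.IsIndepSet' (s ∪ t) := by
    intro s t hsW htW hs ht hxy a ha b hb hne
    rcases ha with ha | ha <;> rcases hb with hb | hb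
    · exact hs ha hb hne
    · intro hadj'
      obtain ⟨rfl, rfl⟩ := hS1 a (hsW ha) b (htW hb) hadj'
      rcases hxy with h | h
      · exact h ha
      · exact h hb
    · intro hadj'
      obtain ⟨rfl, rfl⟩ := hS1 b (hsW hb) a (htW ha) hadj'.symm
      rcases hxy with h | h
      · exact h hb
      · exact h ha
    · exact ht ha hb hne
  have hcardsplit : ∀ s : Set V, s.ncard = (s ∩ W).ncard + (s ∩ Wᶜ).ncard := by
    intro s
    have hdisj : Disjoint (s ∩ W) (s ∩ Wᶜ) :=
      Set.disjoint_of_subset Set.inter_subset_right Set.inter_subset_right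
        disjoint_compl_right
    rw [← Set.ncard_union_eq hdisj (Set.toFinite _) (Set.toFinite _), Set.inter_union_compl]
  have hucard : ∀ s t : Set V, s ⊆ W → t ⊆ Wᶜ → (s ∪ t).ncard = s.ncard + t.ncard :=
    fun s t hs ht => Set.ncard_union_eq
      (Set.disjoint_of_subset hs ht disjoint_compl_right) (Set.toFinite _) (Set.toFinite _)
  have hmax : ∀ S : Set V, G.IsIndepSet' S →
      (∀ s : Set V, G.IsIndepSet' s → s.ncard ≤ S.ncard) → IsMaxIndepSet G S :=
    fun S hS hbound => ⟨hS, le_antisymm (le_indepNum G hS) (indepNum_le G hbound)⟩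
  obtain ⟨B, hBW, hBind, hBmax⟩ := exists_max_indep_s16 G Wᶜ
  obtain ⟨B1, hB1W, hB1ind, hB1max⟩ := exists_max_indep_s16 G (Wᶜ \ {y})
  have hyB1 : y ∉ B1 := fun h => (hB1W h).2 rfl
  have hB1W' : B1 ⊆ Wᶜ := fun t ht => (hB1W ht).1
  by_cases hcase : ∃ B' : Set V, B' ⊆ Wᶜ ∧ G.IsIndepSet' B' ∧ y ∉ B' ∧ B'.ncard = B.ncard
  · -- Case 1 : some maximum independent subset of Wᶜ avoids y
    obtain ⟨B', hB'W, hB'ind, hyB', hB'card⟩ := hcase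
    refine ⟨A0 ∪ B', ?_, Set.subset_union_left⟩
    apply hmax
    · exact hunion A0 B' hA0W hB'W hA0ind hB'ind (Or.inr hyB')
    · intro s hs
      rw [hcardsplit s, hucard A0 B' hA0W hB'W]
      have h1 : (s ∩ W).ncard ≤ A0.ncard :=
        hA0max _ Set.inter_subset_right (Set.Pairwise.mono Set.inter_subset_left hs)
      have h2 : (s ∩ Wᶜ).ncard ≤ B.ncard :=
        hBmax _ Set.inter_subset_right (Set.Pairwise.mono Set.inter_subset_left hs)
      omega
  · -- Case 2 : every maximum independent subset of Wᶜ contains y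
    push_neg at hcase
    have hB1B : B1.ncard < B.ncard := by
      have h1 : B1.ncard ≤ B.ncard := hBmax _ hB1W' hB1ind
      exact h1.lt_of_ne (hcase B1 hB1W' hB1ind hyB1)
    have hBleB1 : B.ncard ≤ B1.ncard + 1 := by
      have hdiff : (B \ {y}).ncard ≤ B1.ncard :=
        hB1max _ (Set.diff_subset_diff_left hBW)
          (Set.Pairwise.mono Set.diff_subset hBind)
      by_cases hyB : y ∈ B
      · have := Set.ncard_diff_singleton_add_one hyB (Set.toFinite B)
        omega
      · rw [Set.diff_singleton_eq_self hyB] at hdiff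
        omega
    have hBeq : B.ncard = B1.ncard + 1 := by omega
    by_cases hx2 : ∀ s : Set V, s ⊆ W → G.IsIndepSet' s → s.ncard = A0.ncard → x ∈ s
    · -- Case 2a : x lies in every maximum independent subset of W
      refine ⟨A0 ∪ B1, ?_, Set.subset_union_left⟩
      apply hmax
      · exact hunion A0 B1 hA0W hB1W' hA0ind hB1ind (Or.inr hyB1)
      · intro s hs
        rw [hcardsplit s, hucard A0 B1 hA0W hB1W']
        have h1 : (s ∩ W).ncard ≤ A0.ncard :=
          hA0max _ Set.inter_subset_right (Set.Pairwise.mono Set.inter_subset_left hs)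
        by_cases hxs : x ∈ s
        · have hys : y ∉ s := fun hys => hs hxs hys hadj.ne hadj
          have hsub : s ∩ Wᶜ ⊆ Wᶜ \ {y} :=
            fun t ht => ⟨ht.2, fun h => hys (h ▸ ht.1)⟩
          have h2 : (s ∩ Wᶜ).ncard ≤ B1.ncard :=
            hB1max _ hsub (Set.Pairwise.mono Set.inter_subset_left hs)
          omega
        · have hne : (s ∩ W).ncard ≠ A0.ncard := by
            intro heq
            exact hxs (Set.inter_subset_left
              (hx2 _ Set.inter_subset_right
                (Set.Pairwise.mono Set.inter_subset_left hs) heq))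
          have h2 : (s ∩ Wᶜ).ncard ≤ B.ncard :=
            hBmax _ Set.inter_subset_right (Set.Pairwise.mono Set.inter_subset_left hs)
          omega
    · -- Case 2b : contradiction with the non-König–Egerváry hypothesis
      exfalso
      push_neg at hx2
      obtain ⟨A1, hA1W, hA1ind, hA1card, hxA1⟩ := hx2
      have hUW : ∀ (w : V) (p : G.Walk w w), p.IsCycle → ¬(∀ z ∈ p.support, z ∈ W) :=
        fun w p hp hsupp => hyW (hsupp y (cycles_through hconn huni hc hy p hp))
      have hU1 : ∀ (w : V) (p : G.Walk w w), p.IsCycle → ¬(∀ z ∈ p.support, z ∈ Wᶜ \ {y}) :=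
        fun w p hp hsupp => (hsupp y (cycles_through hconn huni hc hy p hp)).2 rfl
      obtain ⟨sW, MW, hsWW, hsWind, hMW, hMWsupp, hkeW⟩ := keForest G W hUW
      obtain ⟨s1, M1, hs1W, hs1ind, hM1, hM1supp, hke1⟩ := keForest G (Wᶜ \ {y}) hU1
      have hind : A1.ncard + B.ncard ≤ indepNum G := by
        have h1 := le_indepNum G (hunion A1 B hA1W hBW hA1ind hBind (Or.inl hxA1))
        rwa [hucard A1 B hA1W hBW] at h1
      have hM1supp' : M1.support ⊆ Wᶜ := fun t ht => (hM1supp ht).1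
      have hdisj : Disjoint MW.support M1.support :=
        Set.disjoint_of_subset hMWsupp hM1supp' disjoint_compl_right
      have hedisj : Disjoint MW.edgeSet M1.edgeSet := by
        rw [Set.disjoint_left]
        have : ∀ (a b : V), s(a,b) ∈ MW.edgeSet → s(a,b) ∉ M1.edgeSet := by
          intro a b h1 h2
          have ha1 : a ∈ MW.support :=
            MW.mem_support.mpr ⟨b, (SimpleGraph.Subgraph.mem_edgeSet).mp h1⟩
          have ha2 : a ∈ M1.support :=
            M1.mem_support.mpr ⟨b, (SimpleGraph.Subgraph.mem_edgeSet).mp h2⟩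
          exact (hM1supp' ha2) (hMWsupp ha1)
        intro e
        induction e using Sym2.ind with
        | _ a b => exact this a b
      have hm : MW.edgeSet.ncard + M1.edgeSet.ncard ≤ matchNum G := by
        have hsup := hMW.sup hM1 hdisj
        have h1 := le_matchNum G hsup
        rw [SimpleGraph.Subgraph.edgeSet_sup,
          Set.ncard_union_eq hedisj (Set.toFinite _) (Set.toFinite _)] at h1
        exact h1
      have h1 : sW.ncard ≤ A1.ncard := hA1card ▸ hA0max _ hsWW hsWind
      have h2 : s1.ncard ≤ B1.ncard := hB1max _ hs1W hs1ind
      have hWW : W.ncard + Wᶜ.ncard = Fintype.card V := by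
        rw [Set.ncard_add_ncard_compl W (Set.toFinite _) (Set.toFinite _)]
        exact Nat.card_eq_fintype_card
      have hyWc : y ∈ Wᶜ := hyW
      have hy' : (Wᶜ \ {y}).ncard + 1 = Wᶜ.ncard :=
        Set.ncard_diff_singleton_add_one hyWc (Set.toFinite _)
      have hpos : 0 < Fintype.card V := Fintype.card_pos_iff.mpr ⟨x⟩
      omega
end
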